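/- arXiv:math/0604525 — 3 statements merged into one kernel-verified Lean document; each statement's English description precedes it below -/
import Mathlib

section
/- Let P = P(t,x) ∈ ℚ[[t,x]] be the unique formal power series with zero constant term satisfying P = x·(E−1)/(1−t·(E−1)), where E = exp(x+t·P). Let Hᵃ = E−1−(x+t·P), let Hᵖ be the unique power series with t·Hᵖ = −x·log(1−t·(E−1)), and let H = Hᵖ + Hᵃ − P. Set A = ∂ₓH and z = x + t·P. Then z = x·exp(t·A) and x = z − t·z·(exp(z)−1); moreover (A,z) is the unique pair of formal power series in ℚ[[t,x]] with A having zero constant term and z ≡ x modulo terms of total degree ≥ 2 which satisfies these two equations. -/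
noncomputable section

open MvPowerSeries

/-- Total degree of a monomial exponent. -/
def totalDeg {σ : Type*} (d : σ →₀ ℕ) : ℕ := d.sum fun _ n => n

/-- The sum `Σ_{m≥0} F m` of a family of multivariate power series, each `F m` having
all its nonzero coefficients in total degree at least `m` (so that each coefficient of
the sum is a finite sum). -/
def fsum {σ : Type*} (F : ℕ → MvPowerSeries σ ℚ) : MvPowerSeries σ ℚ :=
  fun d => ∑ m ∈ Finset.range (totalDeg d + 1), MvPowerSeries.coeff d (F m)

/-- `exp u = Σ_{k≥0} u^k/k!` for a power series `u` with zero constant term. -/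
def expS {σ : Type*} (u : MvPowerSeries σ ℚ) : MvPowerSeries σ ℚ :=
  fsum fun k => (k.factorial : ℚ)⁻¹ • u ^ k

/-- `log(1+u) = Σ_{k≥1} (−1)^{k−1} u^k/k` for a power series `u` with zero constant
term. -/
def logS {σ : Type*} (u : MvPowerSeries σ ℚ) : MvPowerSeries σ ℚ :=
  fsum fun k => if k = 0 then 0 else ((-1 : ℚ) ^ (k - 1) / k) • u ^ k

/-- The partial derivative of a multivariate power series with respect to the
variable `s`. -/
def pderivS {σ : Type*} [DecidableEq σ] (s : σ) (f : MvPowerSeries σ ℚ) :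
    MvPowerSeries σ ℚ :=
  fun d => ((d s : ℕ) + 1 : ℚ) * MvPowerSeries.coeff (d + Finsupp.single s 1) f

end

set_option linter.unusedSectionVars false

noncomputable section AuxCHT
open MvPowerSeries Finset

variable {σ : Type*}

theorem totalDeg_zero : totalDeg (0 : σ →₀ ℕ) = 0 := by simp [totalDeg]
theorem totalDeg_add (a b : σ →₀ ℕ) : totalDeg (a + b) = totalDeg a + totalDeg b :=
  Finsupp.sum_add_index' (fun _ => rfl) (fun _ _ _ => rfl)
theorem le_totalDeg (d : σ →₀ ℕ) (s : σ) : d s ≤ totalDeg d := by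
  by_cases hs : d s = 0
  · omega
  · exact Finset.single_le_sum (f := fun i => d i) (fun i _ => Nat.zero_le _)
      (Finsupp.mem_support_iff.mpr hs)
theorem totalDeg_eq_zero {d : σ →₀ ℕ} (h : totalDeg d = 0) : d = 0 := by
  ext s; have := le_totalDeg d s
  simp only [Finsupp.coe_zero, Pi.zero_apply]; omega

/-- `f` has all nonzero coefficients in total degree `≥ n`. -/
def OrdGE (n : ℕ) (f : MvPowerSeries σ ℚ) : Prop :=
  ∀ d : σ →₀ ℕ, totalDeg d < n → MvPowerSeries.coeff d f = 0

theorem OrdGE.mono {m n : ℕ} {f : MvPowerSeries σ ℚ} (h : OrdGE n f) (hmn : m ≤ n) :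
    OrdGE m f := fun d hd => h d (lt_of_lt_of_le hd hmn)

theorem ordGE_zero (f : MvPowerSeries σ ℚ) : OrdGE 0 f := fun _ h => absurd h (Nat.not_lt_zero _)

theorem ordGE_one {f : MvPowerSeries σ ℚ} (h : constantCoeff f = 0) : OrdGE 1 f := by
  intro d hd
  have : d = 0 := totalDeg_eq_zero (by omega)
  subst this
  simpa [coeff_zero_eq_constantCoeff] using h

theorem OrdGE.add {m : ℕ} {f g : MvPowerSeries σ ℚ} (hf : OrdGE m f) (hg : OrdGE m g) :
    OrdGE m (f + g) := fun d hd => by simp [map_add, hf d hd, hg d hd]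

theorem OrdGE.smul {m : ℕ} (c : ℚ) {f : MvPowerSeries σ ℚ} (hf : OrdGE m f) :
    OrdGE m (c • f) := fun d hd => by
  rw [map_smul, hf d hd, smul_zero]

theorem OrdGE.mul {m n : ℕ} {f g : MvPowerSeries σ ℚ} (hf : OrdGE m f) (hg : OrdGE n g) :
    OrdGE (m + n) (f * g) := by
  classical
  intro d hd
  rw [coeff_mul]
  apply Finset.sum_eq_zero
  rintro ⟨a, b⟩ hab
  rw [HasAntidiagonal.mem_antidiagonal] at hab
  have htd : totalDeg a + totalDeg b = totalDeg d := by rw [← totalDeg_add, hab]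
  by_cases ha : totalDeg a < m
  · rw [hf a ha, zero_mul]
  · rw [hg b (by omega), mul_zero]

theorem ordGE_pow {u : MvPowerSeries σ ℚ} (h : constantCoeff u = 0) (k : ℕ) :
    OrdGE k (u ^ k) := by
  induction k with
  | zero => exact ordGE_zero _
  | succ n ih =>
    rw [pow_succ]
    exact ih.mul (ordGE_one h)

/-- Coefficient of `fsum` as a sum up to any large enough bound. -/
theorem coeff_fsum {F : ℕ → MvPowerSeries σ ℚ} (hF : ∀ m, OrdGE m (F m))
    (d : σ →₀ ℕ) {N : ℕ} (hN : totalDeg d ≤ N) :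
    MvPowerSeries.coeff d (fsum F) = ∑ m ∈ Finset.range (N + 1), MvPowerSeries.coeff d (F m) := by
  have : MvPowerSeries.coeff d (fsum F)
      = ∑ m ∈ Finset.range (totalDeg d + 1), MvPowerSeries.coeff d (F m) := rfl
  rw [this]
  apply Finset.sum_subset
  · exact Finset.range_subset_range.mpr (by omega)
  · intro m _ hm
    rw [Finset.mem_range, not_lt] at hm
    exact hF m d (by omega)

theorem ordGE_fsum {F : ℕ → MvPowerSeries σ ℚ} (hF : ∀ m, OrdGE m (F m)) (n : ℕ)
    (h : ∀ m, OrdGE n (F m)) : OrdGE n (fsum F) := by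
  intro d hd
  rw [coeff_fsum hF d (le_refl _)]
  exact Finset.sum_eq_zero fun m _ => h m d hd

theorem constantCoeff_fsum {F : ℕ → MvPowerSeries σ ℚ} :
    constantCoeff (fsum F) = constantCoeff (F 0) := by
  rw [← coeff_zero_eq_constantCoeff_apply, ← coeff_zero_eq_constantCoeff_apply]
  have : MvPowerSeries.coeff 0 (fsum F)
      = ∑ m ∈ Finset.range (totalDeg (0 : σ →₀ ℕ) + 1), MvPowerSeries.coeff 0 (F m) := rfl
  rw [this, totalDeg_zero]
  simp

theorem fsum_congr {F G : ℕ → MvPowerSeries σ ℚ} (h : ∀ m, F m = G m) : fsum F = fsum G := by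
  have : F = G := funext h
  rw [this]

/-- triangle sum = square sum when terms beyond the antidiagonal vanish -/
theorem triangle_eq_square (D : ℕ) (c : ℕ → ℕ → ℚ) (hc : ∀ i j, D < i + j → c i j = 0) :
    ∑ m ∈ range (D + 1), ∑ p ∈ range (m + 1), c p (m - p)
      = ∑ i ∈ range (D + 1), ∑ j ∈ range (D + 1), c i j := by
  have h2 : ∑ y ∈ range (D + 1) ×ˢ range (D + 1), c y.1 y.2
      = ∑ y ∈ (range (D + 1) ×ˢ range (D + 1)).filter (fun y => y.1 + y.2 ≤ D), c y.1 y.2 := by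
    refine (Finset.sum_filter_of_ne ?_).symm
    intro y _ hy
    by_contra hle
    exact hy (hc y.1 y.2 (by omega))
  have h1 : ∑ x ∈ (range (D + 1)).sigma (fun m => range (m + 1)), c x.2 (x.1 - x.2)
      = ∑ y ∈ (range (D + 1) ×ˢ range (D + 1)).filter (fun y => y.1 + y.2 ≤ D), c y.1 y.2 := by
    refine Finset.sum_nbij' (i := fun x => (x.2, x.1 - x.2)) (j := fun y => ⟨y.1 + y.2, y.1⟩)
      ?_ ?_ ?_ ?_ ?_
    · rintro ⟨m, p⟩ hx
      simp only [Finset.mem_sigma, Finset.mem_range] at hx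
      simp only [Finset.mem_filter, Finset.mem_product, Finset.mem_range]
      omega
    · rintro ⟨i, j⟩ hy
      simp only [Finset.mem_filter, Finset.mem_product, Finset.mem_range] at hy
      simp only [Finset.mem_sigma, Finset.mem_range]
      omega
    · rintro ⟨m, p⟩ hx
      simp only [Finset.mem_sigma, Finset.mem_range] at hx
      simp only [Sigma.mk.inj_iff]
      exact ⟨by omega, heq_of_eq rfl⟩
    · rintro ⟨i, j⟩ hy
      simp only [Finset.mem_filter, Finset.mem_product, Finset.mem_range] at hy
      dsimp only
      simp only [Prod.mk.injEq]
      exact ⟨trivial, by omega⟩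
    · rintro ⟨m, p⟩ hx
      rfl
  rw [← Finset.sum_sigma' (range (D + 1)) (fun m => range (m + 1)) (fun m p => c p (m - p))] at h1
  rw [Finset.sum_product' (f := fun i j => c i j)] at h2
  rw [h1, ← h2]

theorem fsum_mul {F G : ℕ → MvPowerSeries σ ℚ} (hF : ∀ m, OrdGE m (F m))
    (hG : ∀ m, OrdGE m (G m)) :
    fsum F * fsum G = fsum fun m => ∑ p ∈ range (m + 1), F p * G (m - p) := by
  classical
  apply MvPowerSeries.ext
  intro d
  set D := totalDeg d with hD
  have hH : ∀ m, OrdGE m (∑ p ∈ range (m + 1), F p * G (m - p)) := by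
    intro m d' hd'
    rw [map_sum]
    apply Finset.sum_eq_zero
    intro p hp
    rw [Finset.mem_range] at hp
    have : OrdGE (p + (m - p)) (F p * G (m - p)) := (hF p).mul (hG (m - p))
    exact this d' (by omega)
  rw [coeff_fsum hH d (le_refl D), coeff_mul]
  have step1 : ∀ ab ∈ antidiagonal d,
      MvPowerSeries.coeff ab.1 (fsum F) * MvPowerSeries.coeff ab.2 (fsum G)
        = ∑ i ∈ range (D + 1), ∑ j ∈ range (D + 1),
            MvPowerSeries.coeff ab.1 (F i) * MvPowerSeries.coeff ab.2 (G j) := by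
    rintro ⟨a, b⟩ hab
    rw [HasAntidiagonal.mem_antidiagonal] at hab
    have h1 : totalDeg a ≤ D := by
      have := totalDeg_add a b
      rw [hab] at this
      omega
    have h2 : totalDeg b ≤ D := by
      have := totalDeg_add a b
      rw [hab] at this
      omega
    rw [coeff_fsum hF a h1, coeff_fsum hG b h2, Finset.sum_mul_sum]
  rw [Finset.sum_congr rfl step1, Finset.sum_comm]
  have step2 : ∀ i ∈ range (D+1), ∑ ab ∈ antidiagonal d, ∑ j ∈ range (D + 1),
      MvPowerSeries.coeff ab.1 (F i) * MvPowerSeries.coeff ab.2 (G j)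
      = ∑ j ∈ range (D + 1), MvPowerSeries.coeff d (F i * G j) := by
    intro i _
    rw [Finset.sum_comm]
    exact Finset.sum_congr rfl fun j _ => (coeff_mul _ _ _).symm
  rw [Finset.sum_congr rfl step2]
  have step3 : ∀ m ∈ range (D+1), MvPowerSeries.coeff d (∑ p ∈ range (m + 1), F p * G (m - p))
      = ∑ p ∈ range (m + 1), MvPowerSeries.coeff d (F p * G (m - p)) := fun m _ => map_sum _ _ _
  rw [Finset.sum_congr rfl step3, triangle_eq_square D
    (fun i j => MvPowerSeries.coeff d (F i * G j))
    (fun i j hij => ((hF i).mul (hG j)) d (by omega))]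
theorem ordGE_zero_series (n : ℕ) : OrdGE n (0 : MvPowerSeries σ ℚ) :=
  fun _ _ => map_zero _

theorem fsum_ite (g : MvPowerSeries σ ℚ) :
    fsum (fun m => if m = 0 then g else 0) = g := by
  apply MvPowerSeries.ext
  intro d
  have h0 : MvPowerSeries.coeff d (fsum (fun m => if m = 0 then g else 0))
      = ∑ m ∈ Finset.range (totalDeg d + 1), MvPowerSeries.coeff d
          (if m = 0 then g else 0) := rfl
  rw [h0, Finset.sum_eq_single 0]
  · simp
  · intro m _ hm
    simp [hm]
  · intro h
    simp at h

theorem fsum_mul_right {F : ℕ → MvPowerSeries σ ℚ} (hF : ∀ m, OrdGE m (F m))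
    (g : MvPowerSeries σ ℚ) :
    fsum F * g = fsum fun m => F m * g := by
  set G : ℕ → MvPowerSeries σ ℚ := fun m => if m = 0 then g else 0 with hGdef
  have hG : ∀ m, OrdGE m (G m) := by
    intro m
    rcases Nat.eq_zero_or_pos m with rfl | hm
    · exact ordGE_zero _
    · have : G m = 0 := by simp [hGdef, Nat.pos_iff_ne_zero.mp hm]
      rw [this]
      exact ordGE_zero_series _
  calc fsum F * g = fsum F * fsum G := by rw [fsum_ite]
    _ = fsum (fun m => ∑ p ∈ range (m + 1), F p * G (m - p)) := fsum_mul hF hG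
    _ = fsum (fun m => F m * g) := by
        apply fsum_congr
        intro m
        rw [Finset.sum_eq_single m]
        · simp [hGdef]
        · intro p hp hpm
          rw [Finset.mem_range] at hp
          have : G (m - p) = 0 := by
            have : m - p ≠ 0 := by omega
            simp [hGdef, this]
          rw [this, mul_zero]
        · intro h
          exact absurd (Finset.self_mem_range_succ m) h

theorem mul_fsum {F : ℕ → MvPowerSeries σ ℚ} (hF : ∀ m, OrdGE m (F m))
    (g : MvPowerSeries σ ℚ) :
    g * fsum F = fsum fun m => g * F m := by
  rw [mul_comm, fsum_mul_right hF]
  exact fsum_congr fun m => mul_comm _ _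

theorem fsum_shift {F : ℕ → MvPowerSeries σ ℚ} (hF : ∀ m, OrdGE m (F m)) (h0 : F 0 = 0) :
    fsum F = fsum fun m => F (m + 1) := by
  apply MvPowerSeries.ext
  intro d
  have hG : ∀ m, OrdGE m (F (m + 1)) := fun m => (hF (m + 1)).mono (by omega)
  rw [coeff_fsum hF d (Nat.le_succ (totalDeg d)), coeff_fsum hG d (le_refl _)]
  rw [Finset.sum_range_succ']
  simp [h0]

theorem expS_eq (u : MvPowerSeries σ ℚ) :
    expS u = fsum fun k => (k.factorial : ℚ)⁻¹ • u ^ k := rfl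

theorem ordGE_expTerm {u : MvPowerSeries σ ℚ} (hu : constantCoeff u = 0) (k : ℕ) :
    OrdGE k ((k.factorial : ℚ)⁻¹ • u ^ k) := (ordGE_pow hu k).smul _

theorem constantCoeff_expS {u : MvPowerSeries σ ℚ} :
    constantCoeff (expS u) = 1 := by
  rw [expS_eq, constantCoeff_fsum]
  simp

theorem expS_zero : expS (0 : MvPowerSeries σ ℚ) = 1 := by
  rw [expS_eq]
  have : ∀ k : ℕ, (k.factorial : ℚ)⁻¹ • (0 : MvPowerSeries σ ℚ) ^ k
      = if k = 0 then 1 else 0 := by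
    intro k
    rcases Nat.eq_zero_or_pos k with rfl | hk
    · simp
    · rw [zero_pow (by omega), smul_zero, if_neg (by omega)]
  rw [fsum_congr this, fsum_ite]

theorem factorial_scalar {m p : ℕ} (hp : p ≤ m) :
    ((p.factorial : ℚ))⁻¹ * (((m - p).factorial : ℚ))⁻¹
      = (m.choose p : ℚ) * ((m.factorial : ℚ))⁻¹ := by
  have key : (m.choose p : ℚ) * p.factorial * (m - p).factorial = m.factorial := by
    exact_mod_cast congrArg (Nat.cast : ℕ → ℚ) (Nat.choose_mul_factorial_mul_factorial hp)
  have h1 : (p.factorial : ℚ) ≠ 0 := Nat.cast_ne_zero.mpr (Nat.factorial_ne_zero p)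
  have h2 : ((m - p).factorial : ℚ) ≠ 0 := Nat.cast_ne_zero.mpr (Nat.factorial_ne_zero _)
  have h3 : (m.factorial : ℚ) ≠ 0 := Nat.cast_ne_zero.mpr (Nat.factorial_ne_zero m)
  field_simp
  linarith [key]

theorem expS_add {u v : MvPowerSeries σ ℚ} (hu : constantCoeff u = 0)
    (hv : constantCoeff v = 0) :
    expS (u + v) = expS u * expS v := by
  rw [expS_eq, expS_eq, expS_eq, fsum_mul (ordGE_expTerm hu) (ordGE_expTerm hv)]
  apply fsum_congr
  intro m
  rw [add_pow]
  rw [Finset.smul_sum]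
  apply Finset.sum_congr rfl
  intro p hp
  rw [Finset.mem_range] at hp
  have hpm : p ≤ m := by omega
  rw [smul_mul_smul_comm, factorial_scalar hpm]
  rw [mul_comm ((m.choose p : ℚ)) _, ← smul_smul]
  congr 1
  rw [Nat.cast_smul_eq_nsmul, nsmul_eq_mul, mul_comm]

variable [DecidableEq σ]

theorem coeff_pderivS (s : σ) (f : MvPowerSeries σ ℚ) (d : σ →₀ ℕ) :
    MvPowerSeries.coeff d (pderivS s f)
      = ((d s : ℕ) + 1 : ℚ) * MvPowerSeries.coeff (d + Finsupp.single s 1) f := rfl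

theorem totalDeg_single (s : σ) : totalDeg (Finsupp.single s 1) = 1 := by
  simp [totalDeg, Finsupp.sum_single_index]

theorem pderivS_add (s : σ) (f g : MvPowerSeries σ ℚ) :
    pderivS s (f + g) = pderivS s f + pderivS s g := by
  apply MvPowerSeries.ext
  intro d
  rw [map_add, coeff_pderivS, coeff_pderivS, coeff_pderivS, map_add]
  ring

theorem pderivS_neg (s : σ) (f : MvPowerSeries σ ℚ) :
    pderivS s (-f) = -pderivS s f := by
  apply MvPowerSeries.ext
  intro d
  rw [map_neg, coeff_pderivS, coeff_pderivS, map_neg]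
  ring

theorem pderivS_sub (s : σ) (f g : MvPowerSeries σ ℚ) :
    pderivS s (f - g) = pderivS s f - pderivS s g := by
  rw [sub_eq_add_neg, pderivS_add, pderivS_neg, sub_eq_add_neg]

theorem pderivS_smul (s : σ) (c : ℚ) (f : MvPowerSeries σ ℚ) :
    pderivS s (c • f) = c • pderivS s f := by
  apply MvPowerSeries.ext
  intro d
  rw [map_smul, coeff_pderivS, coeff_pderivS, map_smul, smul_eq_mul, smul_eq_mul]
  ring

theorem pderivS_one (s : σ) : pderivS s (1 : MvPowerSeries σ ℚ) = 0 := by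
  apply MvPowerSeries.ext
  intro d
  rw [coeff_pderivS, map_zero]
  have hne : d + Finsupp.single s 1 ≠ 0 := by
    intro h
    have := congrArg (fun v => v s) h
    simp [Finsupp.single_apply] at this
  rw [MvPowerSeries.coeff_one, if_neg hne, mul_zero]

theorem pderivS_zero_series (s : σ) : pderivS s (0 : MvPowerSeries σ ℚ) = 0 := by
  apply MvPowerSeries.ext
  intro d
  rw [coeff_pderivS, map_zero, map_zero, mul_zero]

theorem addSingle_self (a : σ →₀ ℕ) (s : σ) : (a + Finsupp.single s 1 : σ →₀ ℕ) s = a s + 1 := by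
  simp

theorem addSingle_ne (a : σ →₀ ℕ) {j s : σ} (h : j ≠ s) :
    (a + Finsupp.single s 1 : σ →₀ ℕ) j = a j := by
  simp [Finsupp.single_apply, Ne.symm h]

theorem pderivS_X (s i : σ) :
    pderivS s (X i : MvPowerSeries σ ℚ) = if i = s then 1 else 0 := by
  apply MvPowerSeries.ext
  intro d
  rw [coeff_pderivS, MvPowerSeries.coeff_X]
  by_cases his : i = s
  · subst his
    rw [if_pos rfl]
    by_cases hd : d = 0
    · subst hd
      rw [if_pos (by simp), MvPowerSeries.coeff_one, if_pos rfl]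
      simp
    · rw [if_neg (fun h => hd (add_right_cancel (h.trans (zero_add _).symm))),
        MvPowerSeries.coeff_one, if_neg hd, mul_zero]
  · rw [if_neg his, map_zero, if_neg, mul_zero]
    intro h
    have := congrArg (fun v => v s) h
    simp only [addSingle_self] at this
    rw [Finsupp.single_apply, if_neg his] at this
    omega

/-- Key reindexing step for the Leibniz rule. -/
theorem leibniz_shift (s : σ) (f g : MvPowerSeries σ ℚ) (d : σ →₀ ℕ) :
    ∑ ab ∈ antidiagonal d,
        (((ab.1 : σ →₀ ℕ) s : ℚ) + 1) * MvPowerSeries.coeff (ab.1 + Finsupp.single s 1) f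
          * MvPowerSeries.coeff ab.2 g
      = ∑ pq ∈ antidiagonal (d + Finsupp.single s 1),
          ((pq.1 : σ →₀ ℕ) s : ℚ) * MvPowerSeries.coeff pq.1 f * MvPowerSeries.coeff pq.2 g := by
  have hfil : ∑ pq ∈ antidiagonal (d + Finsupp.single s 1),
        ((pq.1 : σ →₀ ℕ) s : ℚ) * MvPowerSeries.coeff pq.1 f * MvPowerSeries.coeff pq.2 g
      = ∑ pq ∈ (antidiagonal (d + Finsupp.single s 1)).filter (fun pq => (pq.1 : σ →₀ ℕ) s ≠ 0),
          ((pq.1 : σ →₀ ℕ) s : ℚ) * MvPowerSeries.coeff pq.1 f * MvPowerSeries.coeff pq.2 g := by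
    refine (Finset.sum_filter_of_ne ?_).symm
    rintro ⟨p, q⟩ _ hval hps
    apply hval
    rw [hps]
    push_cast
    ring
  rw [hfil]
  refine Finset.sum_nbij' (i := fun ab => (ab.1 + Finsupp.single s 1, ab.2))
    (j := fun pq => (pq.1 - Finsupp.single s 1, pq.2)) ?_ ?_ ?_ ?_ ?_
  · rintro ⟨a, b⟩ hab
    rw [HasAntidiagonal.mem_antidiagonal] at hab
    simp only [Finset.mem_filter, HasAntidiagonal.mem_antidiagonal]
    refine ⟨by rw [← hab]; abel, ?_⟩
    rw [addSingle_self]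
    omega
  · rintro ⟨p, q⟩ hpq
    simp only [Finset.mem_filter, HasAntidiagonal.mem_antidiagonal] at hpq
    obtain ⟨hsum, hps⟩ := hpq
    rw [HasAntidiagonal.mem_antidiagonal]
    have happ : ∀ j, p j + q j = d j + (Finsupp.single s 1) j := fun j => by
      exact congrArg (fun v => v j) hsum
    ext j
    simp only [Finsupp.coe_add, Pi.add_apply, Finsupp.coe_tsub, Pi.sub_apply]
    have hj2 := happ j
    by_cases hj : j = s
    · subst hj
      rw [Finsupp.single_apply, if_pos rfl] at hj2 ⊢
      omega
    · rw [Finsupp.single_apply, if_neg (fun h => hj h.symm)] at hj2 ⊢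
      omega
  · rintro ⟨a, b⟩ _
    simp only [Prod.mk.injEq]
    refine ⟨?_, trivial⟩
    ext j
    simp only [Finsupp.coe_tsub, Pi.sub_apply, Finsupp.coe_add, Pi.add_apply]
    omega
  · rintro ⟨p, q⟩ hpq
    simp only [Finset.mem_filter, HasAntidiagonal.mem_antidiagonal] at hpq
    obtain ⟨hsum, hps⟩ := hpq
    simp only [Prod.mk.injEq]
    refine ⟨?_, trivial⟩
    ext j
    simp only [Finsupp.coe_add, Pi.add_apply, Finsupp.coe_tsub, Pi.sub_apply]
    by_cases hj : j = s
    · subst hj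
      rw [Finsupp.single_apply, if_pos rfl]
      omega
    · rw [Finsupp.single_apply, if_neg (fun h => hj h.symm)]
      omega
  · rintro ⟨a, b⟩ hab
    dsimp only
    rw [addSingle_self]
    push_cast
    ring

theorem swap_antidiag_sum (n : σ →₀ ℕ) (c : (σ →₀ ℕ) → (σ →₀ ℕ) → ℚ) :
    ∑ pq ∈ antidiagonal n, c pq.1 pq.2 = ∑ pq ∈ antidiagonal n, c pq.2 pq.1 := by
  refine Finset.sum_nbij' (i := Prod.swap) (j := Prod.swap) ?_ ?_ ?_ ?_ ?_
  · rintro ⟨a, b⟩ hab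
    simp only [HasAntidiagonal.mem_antidiagonal, Prod.swap_prod_mk] at hab ⊢
    rw [← hab]; exact add_comm _ _
  · rintro ⟨a, b⟩ hab
    simp only [HasAntidiagonal.mem_antidiagonal, Prod.swap_prod_mk] at hab ⊢
    rw [← hab]; exact add_comm _ _
  · rintro ⟨a, b⟩ _; rfl
  · rintro ⟨a, b⟩ _; rfl
  · rintro ⟨a, b⟩ _; rfl

theorem pderivS_mul (s : σ) (f g : MvPowerSeries σ ℚ) :
    pderivS s (f * g) = pderivS s f * g + f * pderivS s g := by
  classical
  apply MvPowerSeries.ext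
  intro d
  rw [map_add, coeff_pderivS, coeff_mul, coeff_mul, coeff_mul]
  have h1 : ∑ ab ∈ antidiagonal d,
      MvPowerSeries.coeff ab.1 (pderivS s f) * MvPowerSeries.coeff ab.2 g
      = ∑ pq ∈ antidiagonal (d + Finsupp.single s 1),
          ((pq.1 : σ →₀ ℕ) s : ℚ) * MvPowerSeries.coeff pq.1 f * MvPowerSeries.coeff pq.2 g := by
    rw [← leibniz_shift s f g d]
    apply Finset.sum_congr rfl
    rintro ⟨a, b⟩ _
    rw [coeff_pderivS]
  have h2 : ∑ ab ∈ antidiagonal d,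
      MvPowerSeries.coeff ab.1 f * MvPowerSeries.coeff ab.2 (pderivS s g)
      = ∑ pq ∈ antidiagonal (d + Finsupp.single s 1),
          ((pq.2 : σ →₀ ℕ) s : ℚ) * MvPowerSeries.coeff pq.1 f
            * MvPowerSeries.coeff pq.2 g := by
    calc ∑ ab ∈ antidiagonal d,
          MvPowerSeries.coeff ab.1 f * MvPowerSeries.coeff ab.2 (pderivS s g)
        = ∑ ab ∈ antidiagonal d,
            (((ab.1 : σ →₀ ℕ) s : ℚ) + 1) * MvPowerSeries.coeff (ab.1 + Finsupp.single s 1) g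
              * MvPowerSeries.coeff ab.2 f := by
          rw [swap_antidiag_sum d (fun a b => MvPowerSeries.coeff a f
            * MvPowerSeries.coeff b (pderivS s g))]
          apply Finset.sum_congr rfl
          rintro ⟨a, b⟩ _
          dsimp only
          rw [coeff_pderivS]
          ring
      _ = ∑ pq ∈ antidiagonal (d + Finsupp.single s 1),
            ((pq.1 : σ →₀ ℕ) s : ℚ) * MvPowerSeries.coeff pq.1 g
              * MvPowerSeries.coeff pq.2 f := leibniz_shift s g f d
      _ = ∑ pq ∈ antidiagonal (d + Finsupp.single s 1),
            ((pq.2 : σ →₀ ℕ) s : ℚ) * MvPowerSeries.coeff pq.1 f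
              * MvPowerSeries.coeff pq.2 g := by
          rw [swap_antidiag_sum (d + Finsupp.single s 1)
            (fun a b => ((a : σ →₀ ℕ) s : ℚ) * MvPowerSeries.coeff a g
              * MvPowerSeries.coeff b f)]
          apply Finset.sum_congr rfl
          rintro ⟨p, q⟩ _
          dsimp only
          ring
  rw [h1, h2, ← Finset.sum_add_distrib, Finset.mul_sum]
  apply Finset.sum_congr rfl
  rintro ⟨p, q⟩ hpq
  rw [HasAntidiagonal.mem_antidiagonal] at hpq
  have happ : p s + q s = d s + 1 := by
    have := congrArg (fun v => v s) hpq
    simpa only [addSingle_self, Finsupp.coe_add, Pi.add_apply] using this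
  have hQ : (p s : ℚ) + (q s : ℚ) = (d s : ℚ) + 1 := by exact_mod_cast happ
  dsimp only
  linear_combination (-(MvPowerSeries.coeff p f * MvPowerSeries.coeff q g)) * hQ

variable [DecidableEq σ]

theorem pderivS_pow (s : σ) (u : MvPowerSeries σ ℚ) (k : ℕ) :
    pderivS s (u ^ (k + 1)) = ((k : ℚ) + 1) • (u ^ k * pderivS s u) := by
  induction k with
  | zero => simp [pderivS_mul, pderivS_one]
  | succ n ih =>
    rw [pow_succ (n := n + 1), pderivS_mul, ih, smul_mul_assoc]
    have h1 : u ^ n * pderivS s u * u = u ^ (n + 1) * pderivS s u := by ring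
    rw [h1]
    have h2 : ((n : ℚ) + 1 + 1) • (u ^ (n + 1) * pderivS s u)
        = ((n : ℚ) + 1) • (u ^ (n + 1) * pderivS s u) + u ^ (n + 1) * pderivS s u := by
      rw [add_smul, one_smul]
    push_cast
    rw [h2]

/-- Derivative of an `fsum`. -/
theorem pderivS_fsum (s : σ) (F : ℕ → MvPowerSeries σ ℚ) :
    pderivS s (fsum F) = pderivS s (F 0) + fsum (fun m => pderivS s (F (m + 1))) := by
  apply MvPowerSeries.ext
  intro d
  rw [map_add, coeff_pderivS]
  have hfsum : ∀ (G : ℕ → MvPowerSeries σ ℚ) (e : σ →₀ ℕ),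
      MvPowerSeries.coeff e (fsum G)
        = ∑ m ∈ Finset.range (totalDeg e + 1), MvPowerSeries.coeff e (G m) := fun _ _ => rfl
  rw [hfsum, hfsum]
  have htd : totalDeg (d + Finsupp.single s 1) = totalDeg d + 1 := by
    rw [totalDeg_add, totalDeg_single]
  rw [htd, Finset.mul_sum, Finset.sum_range_succ']
  have : ∀ m, ((d s : ℕ) + 1 : ℚ) * MvPowerSeries.coeff (d + Finsupp.single s 1) (F m)
      = MvPowerSeries.coeff d (pderivS s (F m)) := fun m => (coeff_pderivS s (F m) d).symm
  rw [Finset.sum_congr rfl (fun m _ => this (m + 1)), this 0]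
  ring

theorem pderivS_expS (s : σ) {u : MvPowerSeries σ ℚ} (hu : constantCoeff u = 0) :
    pderivS s (expS u) = expS u * pderivS s u := by
  rw [expS, pderivS_fsum]
  have h0 : pderivS s ((Nat.factorial 0 : ℚ)⁻¹ • u ^ 0) = 0 := by
    simp [pderivS_smul, pderivS_one]
  rw [h0, zero_add]
  have hterm : ∀ m : ℕ, pderivS s (((m + 1).factorial : ℚ)⁻¹ • u ^ (m + 1))
      = (m.factorial : ℚ)⁻¹ • (u ^ m * pderivS s u) := by
    intro m
    rw [pderivS_smul, pderivS_pow, smul_smul]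
    congr 1
    rw [Nat.factorial_succ]
    push_cast
    rw [mul_inv]
    field_simp
  rw [fsum_congr hterm,
    fsum_congr (fun m => (smul_mul_assoc ((m.factorial : ℚ))⁻¹ (u ^ m) (pderivS s u)).symm),
    ← fsum_mul_right (fun m => ordGE_expTerm hu m) (pderivS s u)]

/-- Geometric series `Σ (-1)^m w^m`, inverse of `1 + w`. -/
theorem geom_inv {w : MvPowerSeries σ ℚ} (hw : constantCoeff w = 0) :
    (1 + w) * fsum (fun m => (-1 : ℚ) ^ m • w ^ m) = 1 := by
  have hG : ∀ m, OrdGE m ((-1 : ℚ) ^ m • w ^ m) := fun m => (ordGE_pow hw m).smul _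
  rw [add_mul, one_mul, mul_fsum hG]
  apply MvPowerSeries.ext
  intro d
  rw [map_add]
  have hfsum : ∀ (G : ℕ → MvPowerSeries σ ℚ),
      MvPowerSeries.coeff d (fsum G)
        = ∑ m ∈ Finset.range (totalDeg d + 1), MvPowerSeries.coeff d (G m) := fun _ => rfl
  rw [hfsum, hfsum, ← Finset.sum_add_distrib]
  have hterm : ∀ m, MvPowerSeries.coeff d ((-1 : ℚ) ^ m • w ^ m)
        + MvPowerSeries.coeff d (w * ((-1 : ℚ) ^ m • w ^ m))
      = MvPowerSeries.coeff d ((-1 : ℚ) ^ m • w ^ m)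
        - MvPowerSeries.coeff d ((-1 : ℚ) ^ (m + 1) • w ^ (m + 1)) := by
    intro m
    rw [mul_smul_comm, ← pow_succ']
    rw [pow_succ' (-1 : ℚ) m, neg_one_mul, neg_smul, map_neg]
    ring
  rw [Finset.sum_congr rfl (fun m _ => hterm m), Finset.sum_range_sub']
  have hlast : MvPowerSeries.coeff d ((-1 : ℚ) ^ (totalDeg d + 1) • w ^ (totalDeg d + 1)) = 0 :=
    ((ordGE_pow hw _).smul _) d (by omega)
  rw [hlast, sub_zero]
  have h00 : ((-1 : ℚ) ^ 0 • w ^ 0 : MvPowerSeries σ ℚ) = 1 := by norm_num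
  rw [h00]


theorem ordGE_logTerm {w : MvPowerSeries σ ℚ} (hw : constantCoeff w = 0) (k : ℕ) :
    OrdGE k (if k = 0 then 0 else ((-1 : ℚ) ^ (k - 1) / k) • w ^ k) := by
  rcases Nat.eq_zero_or_pos k with rfl | hk
  · exact ordGE_zero _
  · rw [if_neg (by omega)]
    exact (ordGE_pow hw k).smul _

theorem constantCoeff_logS {w : MvPowerSeries σ ℚ} :
    constantCoeff (logS w) = 0 := by
  rw [logS, constantCoeff_fsum]
  simp

theorem ordGE_one_logS {w : MvPowerSeries σ ℚ} (hw : constantCoeff w = 0) :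
    OrdGE 1 (logS w) := ordGE_one constantCoeff_logS

/-- Chain rule for `logS`: `(1+w) * D (logS w) = D w`. -/
theorem pderivS_logS (s : σ) {w : MvPowerSeries σ ℚ} (hw : constantCoeff w = 0) :
    (1 + w) * pderivS s (logS w) = pderivS s w := by
  have hD : pderivS s (logS w)
      = fsum (fun m => (-1 : ℚ) ^ m • w ^ m) * pderivS s w := by
    rw [logS, pderivS_fsum]
    have h0 : pderivS s (if (0 : ℕ) = 0 then (0 : MvPowerSeries σ ℚ)
        else ((-1 : ℚ) ^ (0 - 1) / (0 : ℕ)) • w ^ 0) = 0 := by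
      rw [if_pos rfl, pderivS_zero_series]
    rw [h0, zero_add]
    have hterm : ∀ m : ℕ, pderivS s (if m + 1 = 0 then (0 : MvPowerSeries σ ℚ)
          else ((-1 : ℚ) ^ (m + 1 - 1) / (m + 1 : ℕ)) • w ^ (m + 1))
        = ((-1 : ℚ) ^ m • w ^ m) * pderivS s w := by
      intro m
      rw [if_neg (by omega), pderivS_smul, pderivS_pow, smul_smul, smul_mul_assoc]
      congr 1
      push_cast
      field_simp
    rw [fsum_congr hterm, ← fsum_mul_right (fun m => (ordGE_pow hw m).smul _) (pderivS s w)]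
  rw [hD, ← mul_assoc, geom_inv hw, one_mul]

/-- Uniqueness for the linear ODE `D_s Y = Y * M s` with zero constant term. -/
theorem ode_unique {Y : MvPowerSeries σ ℚ} (M : σ → MvPowerSeries σ ℚ)
    (h0 : constantCoeff Y = 0)
    (hD : ∀ s, pderivS s Y = Y * M s) : Y = 0 := by
  have key : ∀ n : ℕ, ∀ d : σ →₀ ℕ, totalDeg d ≤ n → MvPowerSeries.coeff d Y = 0 := by
    intro n
    induction n with
    | zero =>
      intro d hd
      have : d = 0 := totalDeg_eq_zero (by omega)
      subst this
      simpa using h0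
    | succ n ih =>
      intro d hd
      rcases Nat.lt_or_ge (totalDeg d) (n + 1) with hlt | hge
      · exact ih d (by omega)
      have hdn : totalDeg d = n + 1 := by omega
      have hdne : d ≠ 0 := by
        intro h
        rw [h, totalDeg_zero] at hdn
        omega
      obtain ⟨s, hs⟩ : ∃ s, d s ≠ 0 := by
        by_contra hall
        push_neg at hall
        exact hdne (Finsupp.ext fun s => hall s)
      set d' := d - Finsupp.single s 1 with hd'
      have hds : d = d' + Finsupp.single s 1 := by
        ext j
        simp only [hd', Finsupp.coe_add, Pi.add_apply, Finsupp.coe_tsub, Pi.sub_apply]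
        by_cases hj : j = s
        · subst hj
          rw [Finsupp.single_apply, if_pos rfl]
          omega
        · rw [Finsupp.single_apply, if_neg (fun h => hj h.symm)]
          omega
      have htd' : totalDeg d' = n := by
        have := totalDeg_add d' (Finsupp.single s 1)
        rw [← hds, totalDeg_single] at this
        omega
      have hcoeff : MvPowerSeries.coeff d' (pderivS s Y)
          = ((d' s : ℕ) + 1 : ℚ) * MvPowerSeries.coeff d Y := by
        rw [coeff_pderivS, ← hds]
      have hzero : MvPowerSeries.coeff d' (pderivS s Y) = 0 := by
        rw [hD s, MvPowerSeries.coeff_mul]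
        apply Finset.sum_eq_zero
        rintro ⟨a, b⟩ hab
        rw [HasAntidiagonal.mem_antidiagonal] at hab
        have : totalDeg a ≤ n := by
          have := totalDeg_add a b
          rw [hab] at this
          omega
        rw [ih a this, zero_mul]
      rw [hcoeff] at hzero
      have hpos : ((d' s : ℕ) + 1 : ℚ) ≠ 0 := by
        positivity
      exact (mul_eq_zero.mp hzero).resolve_left hpos
  apply MvPowerSeries.ext
  intro d
  rw [map_zero]
  exact key (totalDeg d) d (le_refl _)

/-- `exp (log (1+w)) = 1 + w`. -/
theorem expS_logS {w : MvPowerSeries σ ℚ} (hw : constantCoeff w = 0) :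
    expS (logS w) = 1 + w := by
  have hL0 : constantCoeff (logS w) = 0 := constantCoeff_logS
  set Y := expS (logS w) - (1 + w) with hY
  have hY0 : constantCoeff Y = 0 := by
    rw [hY, map_sub, map_add, constantCoeff_expS, map_one, hw]
    ring
  have hYD : ∀ s, pderivS s Y = Y * pderivS s (logS w) := by
    intro s
    rw [hY, pderivS_sub, pderivS_expS s hL0, pderivS_add, pderivS_one, zero_add, sub_mul]
    rw [pderivS_logS s hw]
  have h := ode_unique _ hY0 hYD
  rw [hY] at h
  exact sub_eq_zero.mp h

theorem X_ne_zero (s : σ) : (X s : MvPowerSeries σ ℚ) ≠ 0 := by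
  intro h
  have := congrArg (MvPowerSeries.coeff (Finsupp.single s 1)) h
  rw [MvPowerSeries.coeff_X, if_pos rfl, map_zero] at this
  exact one_ne_zero this

theorem ne_zero_of_constantCoeff {f : MvPowerSeries σ ℚ} (h : constantCoeff f ≠ 0) :
    f ≠ 0 := by
  intro hf
  rw [hf, map_zero] at h
  exact h rfl

theorem expS_neg_mul {u : MvPowerSeries σ ℚ} (hu : constantCoeff u = 0) :
    expS (-u) * expS u = 1 := by
  rw [← expS_add (by rw [map_neg, hu, neg_zero]) hu, neg_add_cancel, expS_zero]

theorem expS_ne_zero {u : MvPowerSeries σ ℚ} : expS u ≠ 0 :=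
  ne_zero_of_constantCoeff (by rw [constantCoeff_expS]; exact one_ne_zero)

theorem expS_injective {a b : MvPowerSeries σ ℚ} (ha : constantCoeff a = 0)
    (hb : constantCoeff b = 0) (h : expS a = expS b) : a = b := by
  have hY0 : constantCoeff (a - b) = 0 := by rw [map_sub, ha, hb, sub_zero]
  have hD : ∀ s, pderivS s (a - b) = (a - b) * 0 := by
    intro s
    rw [mul_zero, pderivS_sub]
    have h1 : expS a * pderivS s a = expS a * pderivS s b := by
      rw [← pderivS_expS s ha]
      conv_lhs => rw [h]
      rw [pderivS_expS s hb, h]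
    have h2 : pderivS s a = pderivS s b := mul_left_cancel₀ expS_ne_zero h1
    rw [h2, sub_self]
  have := ode_unique (fun _ => (0 : MvPowerSeries σ ℚ)) hY0 hD
  exact sub_eq_zero.mp this

theorem fsum_sub (F G : ℕ → MvPowerSeries σ ℚ) :
    fsum (fun m => F m - G m) = fsum F - fsum G := by
  apply MvPowerSeries.ext
  intro d
  rw [map_sub]
  have hf : ∀ (H : ℕ → MvPowerSeries σ ℚ), MvPowerSeries.coeff d (fsum H)
      = ∑ m ∈ Finset.range (totalDeg d + 1), MvPowerSeries.coeff d (H m) := fun _ => rfl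
  rw [hf, hf, hf, ← Finset.sum_sub_distrib]
  exact Finset.sum_congr rfl fun m _ => map_sub _ _ _

/-- `expS a - expS b` is divisible by `a - b`. -/
theorem expS_sub_factor {a b : MvPowerSeries σ ℚ} (ha : constantCoeff a = 0)
    (hb : constantCoeff b = 0) :
    ∃ G : MvPowerSeries σ ℚ, expS a - expS b = (a - b) * G := by
  set S : ℕ → MvPowerSeries σ ℚ :=
    fun k => ∑ i ∈ Finset.range k, a ^ i * b ^ (k - 1 - i) with hS
  have hSord : ∀ k, OrdGE k (S (k + 1)) := by
    intro k
    intro d hd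
    rw [hS]
    rw [map_sum]
    apply Finset.sum_eq_zero
    intro i hi
    rw [Finset.mem_range] at hi
    have : OrdGE (i + (k + 1 - 1 - i)) (a ^ i * b ^ (k + 1 - 1 - i)) :=
      (ordGE_pow ha i).mul (ordGE_pow hb _)
    exact this d (by omega)
  have hpowdiff : ∀ k : ℕ, a ^ k - b ^ k = (a - b) * S k := by
    intro k
    rw [hS, ← geom_sum₂_mul a b k, mul_comm]
  refine ⟨fsum (fun k => ((k + 1).factorial : ℚ)⁻¹ • S (k + 1)), ?_⟩
  have hord1 : ∀ m, OrdGE m (((m.factorial : ℚ))⁻¹ • (a ^ m - b ^ m)) := by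
    intro m
    have h1 : OrdGE m (a ^ m + -(b ^ m)) := (ordGE_pow ha m).add (by
      have := (ordGE_pow hb m).smul (-1 : ℚ)
      simpa [neg_smul] using this)
    have h2 : a ^ m - b ^ m = a ^ m + -(b ^ m) := sub_eq_add_neg _ _
    rw [h2]
    exact h1.smul _
  calc expS a - expS b
      = fsum (fun k => (k.factorial : ℚ)⁻¹ • (a ^ k - b ^ k)) := by
        rw [expS, expS, ← fsum_sub]
        exact fsum_congr fun k => by rw [smul_sub]
    _ = fsum (fun k => ((k + 1).factorial : ℚ)⁻¹ • (a ^ (k + 1) - b ^ (k + 1))) := by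
        apply fsum_shift hord1
        simp
    _ = fsum (fun k => (a - b) * (((k + 1).factorial : ℚ)⁻¹ • S (k + 1))) := by
        apply fsum_congr
        intro k
        rw [hpowdiff (k + 1), mul_smul_comm]
    _ = (a - b) * fsum (fun k => ((k + 1).factorial : ℚ)⁻¹ • S (k + 1)) := by
        rw [mul_fsum (fun m => (hSord m).smul _)]

/-- Contraction principle: if `Δ = Δ * W` with `W` of positive order then `Δ = 0`. -/
theorem contraction {Δ W : MvPowerSeries σ ℚ} (hW : OrdGE 1 W) (h : Δ = Δ * W) : Δ = 0 := by
  have key : ∀ n, OrdGE n Δ := by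
    intro n
    induction n with
    | zero => exact ordGE_zero _
    | succ n ih =>
      have : OrdGE (n + 1) (Δ * W) := ih.mul hW
      intro d hd
      rw [h]
      exact this d hd
  apply MvPowerSeries.ext
  intro d
  rw [map_zero]
  exact key (totalDeg d + 1) d (by omega)

end AuxCHT

open MvPowerSeries in
/-- In `ℚ[[t,x]]` (with `t = X 0`, `x = X 1`): if `P` is the (unique) series with zero
constant term satisfying `P = x(E−1)/(1−t(E−1))` with `E = exp(x+tP)`,
`Hᵃ = E−1−(x+tP)`, `t·Hᵖ = −x·log(1−t(E−1))`, `H = Hᵖ+Hᵃ−P`, `A = ∂ₓH` and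
`z = x+tP`, then `z = x·exp(tA)` and `x = z−tz(exp z−1)`, and `(A,z)` is the unique
pair with `A` of zero constant term and `z ≡ x` modulo total degree `≥ 2` satisfying
these two equations. -/
theorem cyclic_hypertree_series_inversion
    (P Hp Ha H A z : MvPowerSeries (Fin 2) ℚ)
    (hP0 : constantCoeff P = 0)
    (hP : P = X 1 * (expS (X 1 + X 0 * P) - 1) *
        (1 - X 0 * (expS (X 1 + X 0 * P) - 1))⁻¹)
    (hPuniq : ∀ Q : MvPowerSeries (Fin 2) ℚ, constantCoeff Q = 0 →
      Q = X 1 * (expS (X 1 + X 0 * Q) - 1) *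
        (1 - X 0 * (expS (X 1 + X 0 * Q) - 1))⁻¹ → Q = P)
    (hHa : Ha = expS (X 1 + X 0 * P) - 1 - (X 1 + X 0 * P))
    (hHp : X 0 * Hp = -(X 1 * logS (-(X 0 * (expS (X 1 + X 0 * P) - 1)))))
    (hH : H = Hp + Ha - P)
    (hA : A = pderivS 1 H)
    (hz : z = X 1 + X 0 * P) :
    (z = X 1 * expS (X 0 * A) ∧ X 1 = z - X 0 * z * (expS z - 1)) ∧
    ∀ A' z' : MvPowerSeries (Fin 2) ℚ,
      constantCoeff A' = 0 →
      (∀ d : Fin 2 →₀ ℕ, totalDeg d < 2 → coeff d z' = coeff d (X 1)) →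
      z' = X 1 * expS (X 0 * A') →
      X 1 = z' - X 0 * z' * (expS z' - 1) →
      A' = A ∧ z' = z := by

  rw [← hz] at hP hHa hHp
  have hz0 : constantCoeff z = 0 := by
    rw [hz, map_add, map_mul, constantCoeff_X, constantCoeff_X, zero_mul, add_zero]
  have hu0 : constantCoeff (X 0 * (expS z - 1)) = 0 := by
    rw [map_mul, constantCoeff_X, zero_mul]
  have h1u : constantCoeff (1 - X 0 * (expS z - 1)) ≠ 0 := by
    rw [map_sub, map_one, hu0, sub_zero]
    exact one_ne_zero
  have hP1u : P * (1 - X 0 * (expS z - 1)) = X 1 * (expS z - 1) := by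
    conv_lhs => rw [hP]
    rw [mul_assoc, MvPowerSeries.inv_mul_cancel _ h1u, mul_one]
  have hxz : X 1 = z * (1 - X 0 * (expS z - 1)) := by
    linear_combination (-(1 - X 0 * (expS z - 1))) * hz - X 0 * hP1u
  have goal2 : X 1 = z - X 0 * z * (expS z - 1) := by linear_combination hxz
  -- derivative facts
  have hdt : pderivS 1 (X 0 : MvPowerSeries (Fin 2) ℚ) = 0 := by
    rw [pderivS_X, if_neg (by decide)]
  have hdx : pderivS 1 (X 1 : MvPowerSeries (Fin 2) ℚ) = 1 := by
    rw [pderivS_X, if_pos rfl]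
  have hE : pderivS 1 (expS z) = expS z * pderivS 1 z := pderivS_expS 1 hz0
  have hDu : pderivS 1 (X 0 * (expS z - 1)) = X 0 * (expS z * pderivS 1 z) := by
    rw [pderivS_mul, hdt, pderivS_sub, pderivS_one, hE]
    ring
  have hw0 : constantCoeff (-(X 0 * (expS z - 1))) = 0 := by
    rw [map_neg, hu0, neg_zero]
  have e4 : (1 + -(X 0 * (expS z - 1))) * pderivS 1 (logS (-(X 0 * (expS z - 1))))
      = -(X 0 * (expS z * pderivS 1 z)) := by
    rw [pderivS_logS 1 hw0, pderivS_neg, hDu]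
  have e2 := congrArg (pderivS 1) hHp
  rw [pderivS_mul, pderivS_neg, pderivS_mul, hdt, hdx] at e2
  have e3 := congrArg (pderivS 1) hHa
  rw [pderivS_sub, pderivS_sub, pderivS_one, hE] at e3
  have e5 := congrArg (pderivS 1) hz
  rw [pderivS_add, pderivS_mul, hdt, hdx] at e5
  have e6 := congrArg (pderivS 1) hxz
  rw [hdx, pderivS_mul, pderivS_sub, pderivS_one, hDu] at e6
  have e1 : A = pderivS 1 Hp + pderivS 1 Ha - pderivS 1 P := by
    rw [hA, hH, pderivS_sub, pderivS_add]
  have SA : (X 1 * (1 - X 0 * (expS z - 1))) * (X 0 * A)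
      = (X 1 * (1 - X 0 * (expS z - 1))) * (-(logS (-(X 0 * (expS z - 1))))) := by
    linear_combination (X 1 * (1 - X 0 * (expS z - 1)) * X 0) * e1
      + (X 1 * (1 - X 0 * (expS z - 1))) * e2
      + (X 1 * (1 - X 0 * (expS z - 1)) * X 0) * e3
      + (-(X 1 * X 1)) * e4
      + (X 1 * (1 - X 0 * (expS z - 1))) * e5
      + (X 1 * (1 - X 0 * (expS z - 1))) * e6
      + (X 1 * X 0 * expS z * pderivS 1 z) * hxz
  have hxu_ne : (X 1 : MvPowerSeries (Fin 2) ℚ) * (1 - X 0 * (expS z - 1)) ≠ 0 :=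
    mul_ne_zero (X_ne_zero 1) (ne_zero_of_constantCoeff h1u)
  have hta : X 0 * A = -(logS (-(X 0 * (expS z - 1)))) := mul_left_cancel₀ hxu_ne SA
  have hEL : expS (logS (-(X 0 * (expS z - 1)))) = 1 + -(X 0 * (expS z - 1)) := expS_logS hw0
  have hL0 : constantCoeff (logS (-(X 0 * (expS z - 1)))) = 0 := constantCoeff_logS
  have hmul : expS (-(logS (-(X 0 * (expS z - 1))))) * (1 - X 0 * (expS z - 1)) = 1 := by
    have hre : (1 : MvPowerSeries (Fin 2) ℚ) - X 0 * (expS z - 1)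
        = 1 + -(X 0 * (expS z - 1)) := by ring
    rw [hre, ← hEL, expS_neg_mul hL0]
  have goal1 : z = X 1 * expS (X 0 * A) := by
    rw [hta]
    linear_combination (-(expS (-(logS (-(X 0 * (expS z - 1))))))) * hxz + (-z) * hmul
  refine ⟨⟨goal1, goal2⟩, ?_⟩
  intro A' z' hA'0 hz'low hz'exp hz'eq
  have h0X : MvPowerSeries.coeff (0 : Fin 2 →₀ ℕ) (X 1 : MvPowerSeries (Fin 2) ℚ) = 0 := by
    rw [MvPowerSeries.coeff_X, if_neg]
    intro hh
    have := congrArg (fun v => v 1) hh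
    simp at this
  have hz'0 : constantCoeff z' = 0 := by
    rw [← MvPowerSeries.coeff_zero_eq_constantCoeff_apply,
      hz'low 0 (by rw [totalDeg_zero]; omega), h0X]
  have hz'fix : z' = X 1 + X 0 * z' * (expS z' - 1) := by linear_combination -hz'eq
  have hzfix : z = X 1 + X 0 * z * (expS z - 1) := by linear_combination -goal2
  obtain ⟨G, hG⟩ := expS_sub_factor hz'0 hz0
  have hWord : OrdGE 1 (X 0 * ((expS z' - 1) + z * G)) := by
    have h := (ordGE_one (by rw [constantCoeff_X] :
        constantCoeff (X 0 : MvPowerSeries (Fin 2) ℚ) = 0)).mul (ordGE_zero ((expS z' - 1) + z * G))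
    exact h.mono (by omega)
  have hΔ : z' - z = (z' - z) * (X 0 * ((expS z' - 1) + z * G)) := by
    linear_combination hz'fix - hzfix + (X 0 * z) * hG
  have hz'z : z' = z := sub_eq_zero.mp (contraction hWord hΔ)
  refine ⟨?_, hz'z⟩
  have hxx : X 1 * expS (X 0 * A') = X 1 * expS (X 0 * A) := by
    rw [← hz'exp, hz'z, goal1]
  have hexp : expS (X 0 * A') = expS (X 0 * A) := mul_left_cancel₀ (X_ne_zero 1) hxx
  have h0A' : constantCoeff (X 0 * A') = 0 := by
    rw [map_mul, constantCoeff_X, zero_mul]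
  have h0A : constantCoeff (X 0 * A) = 0 := by
    rw [map_mul, constantCoeff_X, zero_mul]
  exact mul_left_cancel₀ (X_ne_zero 0) (expS_injective h0A' h0A hexp)
end

section
/- For all integers n ≥ 2 and k ≥ 1, the number of pairs (T, φ), where T is a cyclic hypertree on {1,…,n} with exactly k edges and φ is a flag of T, equals the number of ordered rooted hypertrees on {1,…,n} with exactly k edges. -/
/-- Number of strict chains `a = x₀ < x₁ < ⋯ < x_k = b` for the relation `r`. -/
noncomputable def nChains {α : Type*} (r : α → α → Prop) (a b : α) (k : ℕ) : ℕ :=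
  Nat.card {f : Fin (k + 1) → α // f 0 = a ∧ f (Fin.last k) = b ∧
    ∀ i : Fin k, r (f i.castSucc) (f i.succ) ∧ f i.castSucc ≠ f i.succ}

/-- The Möbius function of a finite poset `(α, r)`, via Philip Hall's formula
`μ(a,b) = Σ_k (−1)^k · #{chains a = x₀ < ⋯ < x_k = b}`. -/
noncomputable def mobius {α : Type*} [Finite α] (r : α → α → Prop) (a b : α) : ℤ :=
  ∑ k ∈ Finset.range (Nat.card α + 1), (-1 : ℤ) ^ k * nChains r a b k

section Hyper

variable {I : Type*} [DecidableEq I] [Fintype I]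

/-- A walk in a hypergraph with edge set `E`: an alternating sequence of vertices and
edges, each edge containing the two adjacent vertices. -/
def IsWalk (E : Finset (Finset I)) (k : ℕ) (vs : Fin (k + 1) → I)
    (es : Fin k → Finset I) : Prop :=
  (∀ i, es i ∈ E) ∧ ∀ i : Fin k, vs i.castSucc ∈ es i ∧ vs i.succ ∈ es i

/-- A hypergraph is connected if any two vertices are joined by a walk. -/
def HConnected (E : Finset (Finset I)) : Prop :=
  ∀ u v : I, ∃ (k : ℕ) (vs : Fin (k + 1) → I) (es : Fin k → Finset I),
    IsWalk E k vs es ∧ vs 0 = u ∧ vs (Fin.last k) = v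

/-- A cycle: a walk of length `k ≥ 2` with pairwise distinct edges, pairwise distinct
vertices `v₀, …, v_{k-1}`, and `v_k = v₀`. -/
def HasCycle (E : Finset (Finset I)) : Prop :=
  ∃ (k : ℕ) (vs : Fin (k + 1) → I) (es : Fin k → Finset I),
    2 ≤ k ∧ IsWalk E k vs es ∧ Function.Injective es ∧
      (∀ i j : Fin k, vs i.castSucc = vs j.castSucc → i = j) ∧
      vs (Fin.last k) = vs 0

/-- A hypertree on `I`: a nonempty set of edges of cardinality at least 2 which is
connected and has no cycle. -/
def IsHypertree (E : Finset (Finset I)) : Prop :=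
  E.Nonempty ∧ (∀ a ∈ E, 2 ≤ a.card) ∧ HConnected E ∧ ¬ HasCycle E

/-- The set of hypertrees on a finite vertex set `I`. -/
abbrev HypertreeOn (I : Type*) [DecidableEq I] [Fintype I] : Type _ :=
  {E : Finset (Finset I) // IsHypertree E}

/-- The hypertree order: `S ≤ T` iff every edge of `S` is a union of (one or more)
edges of `T`. -/
def HTle (S T : HypertreeOn I) : Prop :=
  ∀ a ∈ S.1, ∃ s : Finset (Finset I), s ⊆ T.1 ∧ s.Nonempty ∧ a = s.sup id

noncomputable instance : Fintype (HypertreeOn I) := Fintype.ofFinite _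

/-- The minimum `0̂` of the hypertree poset: the hypertree whose single edge is all of `I`. -/
def botHT (I : Type*) [DecidableEq I] [Fintype I] (h : 2 ≤ Fintype.card I) :
    HypertreeOn I := by
  refine ⟨{Finset.univ}, Finset.singleton_nonempty _, ?_, ?_, ?_⟩
  · intro a ha
    rw [Finset.mem_singleton] at ha
    subst ha
    simpa using h
  · intro u v
    refine ⟨1, ![u, v], ![Finset.univ], ⟨fun i => by simp [Fin.fin_one_eq_zero i],
      fun i => by simp⟩, rfl, ?_⟩
    show ![u, v] (Fin.last 1) = v
    rfl
  · rintro ⟨k, vs, es, hk, ⟨hesE, -⟩, hinj, -, -⟩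
    have h0 := hesE ⟨0, by omega⟩
    have h1 := hesE ⟨1, by omega⟩
    rw [Finset.mem_singleton] at h0 h1
    have h01 := hinj (h0.trans h1.symm)
    have : (0 : ℕ) = 1 := congrArg Fin.val h01
    omega

end Hyper
/-- A permutation of a set is a cyclic order (cyclic permutation) if it acts
transitively: any element is sent to any other by some power. -/
def IsCyclicPerm {β : Type*} (σ : Equiv.Perm β) : Prop :=
  ∀ a b : β, ∃ m : ℕ, (σ ^ m) a = b

/-- A cyclic hypertree on `I`: a hypertree together with, for each vertex `v`, a
cyclic order on the set of edges containing `v`. -/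
def CyclicHT (I : Type*) [DecidableEq I] [Fintype I] : Type _ :=
  Σ T : HypertreeOn I,
    {c : ∀ v : I, Equiv.Perm {a : Finset I // a ∈ T.1 ∧ v ∈ a} //
      ∀ v, IsCyclicPerm (c v)}

/-- `a` is the outgoing edge of the vertex `v ≠ r` toward the root `r`: the first edge
of a minimal (equivalently, vertex- and edge-injective) walk from `v` to `r`. -/
def OutgoingEdge {I : Type*} [DecidableEq I] [Fintype I] (E : Finset (Finset I))
    (r v : I) (a : Finset I) : Prop :=
  v ≠ r ∧ ∃ (k : ℕ) (vs : Fin (k + 1) → I) (es : Fin k → Finset I),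
    IsWalk E k vs es ∧ vs 0 = v ∧ vs (Fin.last k) = r ∧
    Function.Injective vs ∧ Function.Injective es ∧
    ∃ h : 0 < k, es ⟨0, h⟩ = a

/-- `a` is an entering edge of the vertex `v` with respect to the root `r`: an edge
containing `v` which is not the outgoing edge of `v` (in particular every edge
containing `r` is an entering edge of `r`). -/
def EnteringEdge {I : Type*} [DecidableEq I] [Fintype I] (E : Finset (Finset I))
    (r v : I) (a : Finset I) : Prop :=
  a ∈ E ∧ v ∈ a ∧ ¬ OutgoingEdge E r v a

/-- An ordered rooted hypertree on `I`: a hypertree together with a root vertex `r`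
and, for each vertex `v`, a total order (given as an enumeration without repetition)
on the set of entering edges of `v`. -/
def OrderedRootedHT (I : Type*) [DecidableEq I] [Fintype I] : Type _ :=
  Σ (T : HypertreeOn I) (r : I),
    ∀ v : I, {l : List {a : Finset I // EnteringEdge T.1 r v a} //
      l.Nodup ∧ ∀ a, a ∈ l}


section WalkAux

variable {I : Type*} [DecidableEq I] [Fintype I] {E : Finset (Finset I)}

def NWalk (E : Finset (Finset I)) (k : ℕ) (vs : ℕ → I) (es : ℕ → Finset I) : Prop :=
  ∀ i < k, es i ∈ E ∧ vs i ∈ es i ∧ vs (i + 1) ∈ es i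

def NIWalk (E : Finset (Finset I)) (k : ℕ) (vs : ℕ → I) (es : ℕ → Finset I) : Prop :=
  NWalk E k vs es ∧ (∀ i ≤ k, ∀ j ≤ k, vs i = vs j → i = j) ∧
    (∀ i < k, ∀ j < k, es i = es j → i = j)

lemma nwalk_of_isWalk {k : ℕ} {vs : Fin (k + 1) → I} {es : Fin k → Finset I}
    (h : IsWalk E k vs es) :
    NWalk E k (fun i => vs ⟨min i k, by omega⟩)
      (fun i => if h' : i < k then es ⟨i, h'⟩ else ∅) := by
  intro i hi
  have h2 := h.2 ⟨i, hi⟩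
  refine ⟨by simp [hi, h.1], ?_, ?_⟩
  · have e1 : (⟨min i k, by omega⟩ : Fin (k + 1)) = (⟨i, hi⟩ : Fin k).castSucc := by
      ext; simp [Fin.castSucc, Fin.castAdd, Fin.castLE]; omega
    simp only [hi, dif_pos, e1]
    exact h2.1
  · have e2 : (⟨min (i + 1) k, by omega⟩ : Fin (k + 1)) = (⟨i, hi⟩ : Fin k).succ := by
      ext; simp [Fin.succ]; omega
    simp only [hi, dif_pos, e2]
    exact h2.2

omit [DecidableEq I] [Fintype I] in
lemma isWalk_of_nwalk {k : ℕ} {vs : ℕ → I} {es : ℕ → Finset I} (h : NWalk E k vs es) :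
    IsWalk E k (fun i : Fin (k + 1) => vs i) (fun i : Fin k => es i) := by
  refine ⟨fun i => (h i i.2).1, fun i => ?_⟩
  have := h i i.2
  exact ⟨by simpa [Fin.castSucc, Fin.castAdd, Fin.castLE] using this.2.1,
    by simpa [Fin.succ] using this.2.2⟩

omit [DecidableEq I] [Fintype I] in
lemma nwalk_splice {k : ℕ} {vs : ℕ → I} {es : ℕ → Finset I} (hw : NWalk E k vs es)
    {i j : ℕ} (hij : i < j) (hjk : j ≤ k)
    (hcase : vs i = vs j ∨ (j < k ∧ es i = es j)) :
    NWalk E (k - (j - i)) (fun t => if t ≤ i then vs t else vs (t + (j - i)))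
      (fun t => if t < i then es t else es (t + (j - i))) ∧
    (fun t => if t ≤ i then vs t else vs (t + (j - i))) 0 = vs 0 ∧
    (fun t => if t ≤ i then vs t else vs (t + (j - i))) (k - (j - i)) = vs k := by
  refine ⟨?_, by simp, ?_⟩
  · intro t ht
    have htd : t + (j - i) < k := by omega
    have hwj := hw (t + (j - i)) htd
    dsimp only
    rcases lt_trichotomy t i with h1 | h1 | h1
    · rw [if_pos h1, if_pos (by omega : t ≤ i), if_pos (by omega : t + 1 ≤ i)]
      exact hw t (by omega)
    · rw [if_neg (by omega : ¬ t < i), if_pos (le_of_eq h1),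
        if_neg (by omega : ¬ t + 1 ≤ i)]
      have hj' : t + (j - i) = j := by omega
      have hj2 : t + 1 + (j - i) = j + 1 := by omega
      rw [hj'] at hwj
      rw [hj2, hj']
      refine ⟨hwj.1, ?_, hwj.2.2⟩
      rcases hcase with hv | ⟨hjk', he⟩
      · rw [h1, hv]; exact hwj.2.1
      · rw [h1, ← he]; exact (hw i (by omega)).2.1
    · rw [if_neg (by omega : ¬ t < i), if_neg (by omega : ¬ t ≤ i),
        if_neg (by omega : ¬ t + 1 ≤ i)]
      have : t + 1 + (j - i) = t + (j - i) + 1 := by omega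
      rw [this]
      exact hwj
  · dsimp only
    by_cases h : k - (j - i) ≤ i
    · rw [if_pos h]
      rcases hcase with hv | ⟨hjk', he⟩
      · have h1 : k - (j - i) = i := by omega
        have h2 : j = k := by omega
        rw [h1, hv, h2]
      · omega
    · rw [if_neg h]
      congr 1
      omega

omit [DecidableEq I] [Fintype I] in
lemma exists_niwalk {k : ℕ} {vs : ℕ → I} {es : ℕ → Finset I} (hw : NWalk E k vs es) :
    ∃ (k' : ℕ) (vs' : ℕ → I) (es' : ℕ → Finset I),
      NIWalk E k' vs' es' ∧ vs' 0 = vs 0 ∧ vs' k' = vs k := by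
  induction k using Nat.strong_induction_on generalizing vs es with
  | _ k IH =>
  by_cases hv : ∃ i, i ≤ k ∧ ∃ j, j ≤ k ∧ i < j ∧ vs i = vs j
  · obtain ⟨i, hi, j, hj, hij, hvij⟩ := hv
    obtain ⟨hw', h0, hk⟩ := nwalk_splice hw hij hj (Or.inl hvij)
    obtain ⟨k', vs', es', hni, h0', hk'⟩ := IH (k - (j - i)) (by omega) hw'
    exact ⟨k', vs', es', hni, h0'.trans h0, hk'.trans hk⟩
  · by_cases he : ∃ i, i < k ∧ ∃ j, j < k ∧ i < j ∧ es i = es j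
    · obtain ⟨i, hi, j, hj, hij, heij⟩ := he
      obtain ⟨hw', h0, hk⟩ := nwalk_splice hw hij (by omega) (Or.inr ⟨hj, heij⟩)
      obtain ⟨k', vs', es', hni, h0', hk'⟩ := IH (k - (j - i)) (by omega) hw'
      exact ⟨k', vs', es', hni, h0'.trans h0, hk'.trans hk⟩
    · push_neg at hv he
      refine ⟨k, vs, es, ⟨hw, ?_, ?_⟩, rfl, rfl⟩
      · intro a ha b hb hab
        rcases lt_trichotomy a b with h | h | h
        · exact absurd hab (hv a ha b hb h)
        · exact h
        · exact absurd hab.symm (hv b hb a ha h)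
      · intro a ha b hb hab
        rcases lt_trichotomy a b with h | h | h
        · exact absurd hab (he a ha b hb h)
        · exact h
        · exact absurd hab.symm (he b hb a ha h)



omit [DecidableEq I] [Fintype I] in
lemma niwalk_prefix {k : ℕ} {vs : ℕ → I} {es : ℕ → Finset I} (h : NIWalk E k vs es)
    {p : ℕ} (hp : p ≤ k) : NIWalk E p vs es :=
  ⟨fun i hi => h.1 i (by omega), fun i hi j hj => h.2.1 i (by omega) j (by omega),
    fun i hi j hj => h.2.2 i (by omega) j (by omega)⟩

omit [DecidableEq I] [Fintype I] in
lemma niwalk_shift {k : ℕ} {vs : ℕ → I} {es : ℕ → Finset I} (h : NIWalk E k vs es)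
    {p : ℕ} (hp : p ≤ k) :
    NIWalk E (k - p) (fun t => vs (t + p)) (fun t => es (t + p)) := by
  refine ⟨fun i hi => ?_, fun i hi j hj hv => ?_, fun i hi j hj he => ?_⟩
  · have := h.1 (i + p) (by omega)
    refine ⟨this.1, this.2.1, ?_⟩
    dsimp only
    have e : i + 1 + p = i + p + 1 := by omega
    rw [e]; exact this.2.2
  · have := h.2.1 (i + p) (by omega) (j + p) (by omega) hv
    omega
  · have := h.2.2 (i + p) (by omega) (j + p) (by omega) he
    omega

omit [DecidableEq I] [Fintype I] in
lemma niwalk_reverse {k : ℕ} {vs : ℕ → I} {es : ℕ → Finset I} (h : NIWalk E k vs es) :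
    NIWalk E k (fun t => vs (k - t)) (fun t => es (k - 1 - t)) := by
  refine ⟨fun i hi => ?_, fun i hi j hj hv => ?_, fun i hi j hj he => ?_⟩
  · have hw := h.1 (k - 1 - i) (by omega)
    refine ⟨hw.1, ?_, ?_⟩
    · dsimp only
      have e : k - i = k - 1 - i + 1 := by omega
      rw [e]; exact hw.2.2
    · dsimp only
      have e : k - (i + 1) = k - 1 - i := by omega
      rw [e]; exact hw.2.1
  · have := h.2.1 (k - i) (by omega) (k - j) (by omega) hv
    omega
  · have := h.2.2 (k - 1 - i) (by omega) (k - 1 - j) (by omega) he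
    omega

omit [DecidableEq I] [Fintype I] in
/-- Produce a `HasCycle` witness from ℕ-indexed cyclic data. -/
lemma hasCycle_of_ncycle {K : ℕ} (hK : 2 ≤ K) {cvs : ℕ → I} {ces : ℕ → Finset I}
    (hw : NWalk E K cvs ces)
    (hvinj : ∀ i < K, ∀ j < K, cvs i = cvs j → i = j)
    (heinj : ∀ i < K, ∀ j < K, ces i = ces j → i = j)
    (hclose : cvs K = cvs 0) : HasCycle E := by
  refine ⟨K, fun i : Fin (K + 1) => cvs i, fun i : Fin K => ces i, hK,
    isWalk_of_nwalk hw, ?_, ?_, ?_⟩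
  · intro i j hij
    exact Fin.ext (heinj i i.2 j j.2 hij)
  · intro i j hij
    refine Fin.ext (hvinj i ?_ j ?_ ?_)
    · exact i.2
    · exact j.2
    · simpa [Fin.castSucc, Fin.castAdd, Fin.castLE] using hij
  · simpa using hclose

omit [DecidableEq I] [Fintype I] in
/-- From an injective walk of length `≥ 2` and an extra edge joining its second vertex
to its last vertex, build a cycle. -/
lemma cycle_of_chord {l : ℕ} {ws : ℕ → I} {fs : ℕ → Finset I} (h : NIWalk E l ws fs)
    (hl : 2 ≤ l) {a : Finset I} (haE : a ∈ E) (h1 : ws 1 ∈ a) (h2 : ws l ∈ a)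
    (hne : ∀ t, 1 ≤ t → t < l → a ≠ fs t) : HasCycle E := by
  refine hasCycle_of_ncycle (E := E) (K := l) hl
    (cvs := fun m => if m < l then ws (m + 1) else ws 1)
    (ces := fun m => if m < l - 1 then fs (m + 1) else a) ?_ ?_ ?_ ?_
  · intro m hm
    dsimp only
    by_cases hm1 : m < l - 1
    · rw [if_pos hm1, if_pos hm, if_pos (by omega : m + 1 < l)]
      exact h.1 (m + 1) (by omega)
    · have hml : m = l - 1 := by omega
      rw [if_neg hm1, if_pos hm, if_neg (by omega : ¬ m + 1 < l)]
      have e : m + 1 = l := by omega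
      rw [e]
      exact ⟨haE, h2, h1⟩
  · intro i hi j hj hv
    rw [if_pos hi, if_pos hj] at hv
    have := h.2.1 (i + 1) (by omega) (j + 1) (by omega) hv
    omega
  · intro i hi j hj he
    by_cases hi1 : i < l - 1 <;> by_cases hj1 : j < l - 1
    · rw [if_pos hi1, if_pos hj1] at he
      have := h.2.2 (i + 1) (by omega) (j + 1) (by omega) he
      omega
    · rw [if_pos hi1, if_neg hj1] at he
      exact absurd he.symm (hne (i + 1) (by omega) (by omega))
    · rw [if_neg hi1, if_pos hj1] at he
      exact absurd he (hne (j + 1) (by omega) (by omega))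
    · omega
  · rw [if_neg (by omega : ¬ l < l), if_pos (by omega : 0 < l)]


omit [DecidableEq I] [Fintype I] in
/-- A shared middle edge between two internally disjoint walks with common endpoint
yields a cycle. -/
lemma cycle_mid {k l : ℕ} {vs ws : ℕ → I} {es fs : ℕ → Finset I}
    (h1 : NIWalk E k vs es) (h2 : NIWalk E l ws fs) (hk : 1 ≤ k) (hl : 1 ≤ l)
    (hkl : vs k = ws l)
    (hstar : ∀ p, p ≤ k → ∀ q, q ≤ l → vs p = ws q → (p = 0 ∧ q = 0) ∨ (p = k ∧ q = l))
    {s t : ℕ} (hs : s < k) (ht : t < l) (hst : es s = fs t)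
    (hmax : ∀ p, s < p → p < k → ∀ q, q < l → es p ≠ fs q)
    (hlast : ¬(s = k - 1 ∧ t = l - 1)) : HasCycle E := by
  set K := k + l - s - t - 1 with hK
  have hK2 : 2 ≤ K := by omega
  have hlt : l - 1 - t < K - 1 ∨ l - 1 - t = K - 1 := by omega
  refine hasCycle_of_ncycle hK2
    (cvs := fun m => if m ≤ l - 1 - t then ws (t + 1 + m)
      else if m ≤ K - 1 then vs (k - (m - (l - 1 - t))) else ws (t + 1))
    (ces := fun m => if m < l - 1 - t then fs (t + 1 + m)
      else if m < K - 1 then es (k - 1 - (m - (l - 1 - t))) else es s) ?_ ?_ ?_ ?_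
  · intro m hm
    dsimp only
    rcases lt_trichotomy m (l - 1 - t) with hm1 | hm1 | hm1
    · rw [if_pos hm1, if_pos (le_of_lt hm1), if_pos (by omega : m + 1 ≤ l - 1 - t)]
      exact h2.1 (t + 1 + m) (by omega)
    · rw [if_neg (by omega : ¬ m < l - 1 - t), if_pos (by omega : m ≤ l - 1 - t),
        if_neg (by omega : ¬ m + 1 ≤ l - 1 - t)]
      by_cases h3 : m < K - 1
      · rw [if_pos h3, if_pos (by omega : m + 1 ≤ K - 1)]
        have e1 : t + 1 + m = l := by omega
        have e2 : k - 1 - (m - (l - 1 - t)) = k - 1 := by omega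
        have e3 : k - (m + 1 - (l - 1 - t)) = k - 1 := by omega
        rw [e1, e2, e3, hkl.symm]
        have hw := h1.1 (k - 1) (by omega)
        have e4 : k - 1 + 1 = k := by omega
        rw [e4] at hw
        exact ⟨hw.1, hw.2.2, hw.2.1⟩
      · -- m = K - 1 = l - 1 - t, so s = k - 1
        have hsk : s = k - 1 := by omega
        rw [if_neg h3, if_neg (by omega : ¬ m + 1 ≤ K - 1)]
        have e1 : t + 1 + m = l := by omega
        rw [e1, hkl.symm]
        have hw := h1.1 s (by omega)
        refine ⟨hw.1, ?_, ?_⟩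
        · have e2 : k = s + 1 := by omega
          rw [e2]; exact hw.2.2
        · rw [hst]
          exact (h2.1 t (by omega)).2.2
    · rw [if_neg (by omega : ¬ m < l - 1 - t), if_neg (by omega : ¬ m ≤ l - 1 - t),
        if_neg (by omega : ¬ m + 1 ≤ l - 1 - t)]
      by_cases h3 : m < K - 1
      · rw [if_pos h3, if_pos (by omega : m ≤ K - 1), if_pos (by omega : m + 1 ≤ K - 1)]
        have hw := h1.1 (k - 1 - (m - (l - 1 - t))) (by omega)
        refine ⟨hw.1, ?_, ?_⟩
        · have e : k - (m - (l - 1 - t)) = k - 1 - (m - (l - 1 - t)) + 1 := by omega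
          rw [e]; exact hw.2.2
        · have e : k - (m + 1 - (l - 1 - t)) = k - 1 - (m - (l - 1 - t)) := by omega
          rw [e]; exact hw.2.1
      · have hm2 : m = K - 1 := by omega
        rw [if_neg h3, if_pos (by omega : m ≤ K - 1), if_neg (by omega : ¬ m + 1 ≤ K - 1)]
        have e : k - (m - (l - 1 - t)) = s + 1 := by omega
        rw [e]
        have hw := h1.1 s (by omega)
        refine ⟨hw.1, hw.2.2, ?_⟩
        rw [hst]
        exact (h2.1 t (by omega)).2.2
  · intro i hi j hj hv
    by_cases hi1 : i ≤ l - 1 - t <;> by_cases hj1 : j ≤ l - 1 - t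
    · rw [if_pos hi1, if_pos hj1] at hv
      have := h2.2.1 (t + 1 + i) (by omega) (t + 1 + j) (by omega) hv
      omega
    · rw [if_pos hi1, if_neg hj1, if_pos (by omega : j ≤ K - 1)] at hv
      have := hstar (k - (j - (l - 1 - t))) (by omega) (t + 1 + i) (by omega) hv.symm
      omega
    · rw [if_neg hi1, if_pos (by omega : i ≤ K - 1), if_pos hj1] at hv
      have := hstar (k - (i - (l - 1 - t))) (by omega) (t + 1 + j) (by omega) hv
      omega
    · rw [if_neg hi1, if_pos (by omega : i ≤ K - 1), if_neg hj1,
        if_pos (by omega : j ≤ K - 1)] at hv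
      have := h1.2.1 (k - (i - (l - 1 - t))) (by omega) (k - (j - (l - 1 - t))) (by omega) hv
      omega
  · intro i hi j hj he
    rcases lt_trichotomy i (l - 1 - t) with hi1 | hi1 | hi1 <;>
      rcases lt_trichotomy j (l - 1 - t) with hj1 | hj1 | hj1
    · rw [if_pos hi1, if_pos hj1] at he
      have := h2.2.2 (t + 1 + i) (by omega) (t + 1 + j) (by omega) he
      omega
    all_goals try (
      first
      | (rw [if_pos hi1, if_neg (by omega : ¬ j < l - 1 - t)] at he
         by_cases h3 : j < K - 1
         · rw [if_pos h3] at he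
           exact absurd he.symm (hmax (k - 1 - (j - (l - 1 - t))) (by omega) (by omega)
             (t + 1 + i) (by omega))
         · rw [if_neg h3] at he
           rw [hst] at he
           have := h2.2.2 (t + 1 + i) (by omega) t (by omega) he
           omega)
      | (rw [if_pos hj1, if_neg (by omega : ¬ i < l - 1 - t)] at he
         by_cases h3 : i < K - 1
         · rw [if_pos h3] at he
           exact absurd he (hmax (k - 1 - (i - (l - 1 - t))) (by omega) (by omega)
             (t + 1 + j) (by omega))
         · rw [if_neg h3] at he
           rw [hst] at he
           have := h2.2.2 (t + 1 + j) (by omega) t (by omega) he.symm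
           omega))
    all_goals (
      rw [if_neg (by omega : ¬ i < l - 1 - t), if_neg (by omega : ¬ j < l - 1 - t)] at he
      by_cases h3 : i < K - 1 <;> by_cases h4 : j < K - 1
      · rw [if_pos h3, if_pos h4] at he
        have := h1.2.2 (k - 1 - (i - (l - 1 - t))) (by omega)
          (k - 1 - (j - (l - 1 - t))) (by omega) he
        omega
      · rw [if_pos h3, if_neg h4] at he
        have := h1.2.2 (k - 1 - (i - (l - 1 - t))) (by omega) s (by omega) he
        omega
      · rw [if_neg h3, if_pos h4] at he
        have := h1.2.2 s (by omega) (k - 1 - (j - (l - 1 - t))) (by omega) he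
        omega
      · omega)
  · rw [if_neg (by omega : ¬ K ≤ l - 1 - t), if_neg (by omega : ¬ K ≤ K - 1),
      if_pos (by omega : 0 ≤ l - 1 - t)]


omit [DecidableEq I] [Fintype I] in
/-- Two internally disjoint, edge-disjoint walks with the same endpoints yield a cycle. -/
lemma cycle_disjoint {k l : ℕ} {vs ws : ℕ → I} {es fs : ℕ → Finset I}
    (h1 : NIWalk E k vs es) (h2 : NIWalk E l ws fs) (hk : 1 ≤ k) (hl : 1 ≤ l)
    (h0 : vs 0 = ws 0) (hkl : vs k = ws l)
    (hstar : ∀ p, p ≤ k → ∀ q, q ≤ l → vs p = ws q → (p = 0 ∧ q = 0) ∨ (p = k ∧ q = l))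
    (hns : ∀ s, s < k → ∀ t, t < l → es s ≠ fs t) : HasCycle E := by
  refine hasCycle_of_ncycle (K := k + l) (by omega)
    (cvs := fun m => if m ≤ k then vs m else ws (l - (m - k)))
    (ces := fun m => if m < k then es m else fs (l - 1 - (m - k))) ?_ ?_ ?_ ?_
  · intro m hm
    dsimp only
    rcases lt_trichotomy m k with hm1 | hm1 | hm1
    · rw [if_pos hm1, if_pos (le_of_lt hm1), if_pos (by omega : m + 1 ≤ k)]
      exact h1.1 m hm1
    · rw [if_neg (by omega : ¬ m < k), if_pos (by omega : m ≤ k),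
        if_neg (by omega : ¬ m + 1 ≤ k)]
      have e1 : l - 1 - (m - k) = l - 1 := by omega
      have e2 : l - (m + 1 - k) = l - 1 := by omega
      rw [e1, e2, hm1, hkl]
      have hw := h2.1 (l - 1) (by omega)
      have e3 : l - 1 + 1 = l := by omega
      rw [e3] at hw
      exact ⟨hw.1, hw.2.2, hw.2.1⟩
    · rw [if_neg (by omega : ¬ m < k), if_neg (by omega : ¬ m ≤ k),
        if_neg (by omega : ¬ m + 1 ≤ k)]
      have hw := h2.1 (l - 1 - (m - k)) (by omega)
      refine ⟨hw.1, ?_, ?_⟩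
      · have e : l - (m - k) = l - 1 - (m - k) + 1 := by omega
        rw [e]; exact hw.2.2
      · have e : l - (m + 1 - k) = l - 1 - (m - k) := by omega
        rw [e]; exact hw.2.1
  · intro i hi j hj hv
    by_cases hi1 : i ≤ k <;> by_cases hj1 : j ≤ k
    · rw [if_pos hi1, if_pos hj1] at hv
      exact h1.2.1 i hi1 j hj1 hv
    · rw [if_pos hi1, if_neg hj1] at hv
      have := hstar i hi1 (l - (j - k)) (by omega) hv
      omega
    · rw [if_neg hi1, if_pos hj1] at hv
      have := hstar j hj1 (l - (i - k)) (by omega) hv.symm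
      omega
    · rw [if_neg hi1, if_neg hj1] at hv
      have := h2.2.1 (l - (i - k)) (by omega) (l - (j - k)) (by omega) hv
      omega
  · intro i hi j hj he
    by_cases hi1 : i < k <;> by_cases hj1 : j < k
    · rw [if_pos hi1, if_pos hj1] at he
      exact h1.2.2 i hi1 j hj1 he
    · rw [if_pos hi1, if_neg hj1] at he
      exact absurd he (hns i hi1 (l - 1 - (j - k)) (by omega))
    · rw [if_neg hi1, if_pos hj1] at he
      exact absurd he.symm (hns j hj1 (l - 1 - (i - k)) (by omega))
    · rw [if_neg hi1, if_neg hj1] at he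
      have := h2.2.2 (l - 1 - (i - k)) (by omega) (l - 1 - (j - k)) (by omega) he
      omega
  · rw [if_neg (by omega : ¬ k + l ≤ k), if_pos (by omega : 0 ≤ k)]
    have e : l - (k + l - k) = 0 := by omega
    rw [e, ← h0]

omit [DecidableEq I] [Fintype I] in
/-- Helper: two injective walks with the same endpoints, no internal meeting, and
equal first edges are equal (given the inductive hypothesis). -/
lemma first_edge_aux {N : ℕ} (hnc : ¬ HasCycle E)
    (IH : ∀ (k l : ℕ) (vs ws : ℕ → I) (es fs : ℕ → Finset I), k + l ≤ N →
      NIWalk E k vs es → NIWalk E l ws fs → vs 0 = ws 0 → vs k = ws l →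
      k = l ∧ (∀ i, i ≤ k → vs i = ws i) ∧ (∀ i, i < k → es i = fs i))
    {k l : ℕ} {vs ws : ℕ → I} {es fs : ℕ → Finset I}
    (hN : k + l ≤ N + 1) (h1 : NIWalk E k vs es) (h2 : NIWalk E l ws fs)
    (hk : 1 ≤ k) (hl : 1 ≤ l) (h0 : vs 0 = ws 0) (hkl : vs k = ws l)
    (hstar : ∀ p, p ≤ k → ∀ q, q ≤ l → vs p = ws q → (p = 0 ∧ q = 0) ∨ (p = k ∧ q = l))
    (hfe : es 0 = fs 0) :
    k = l ∧ (∀ i, i ≤ k → vs i = ws i) ∧ (∀ i, i < k → es i = fs i) := by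
  by_cases hk1 : k = 1
  · by_cases hl1 : l = 1
    · subst hk1; subst hl1
      refine ⟨rfl, ?_, ?_⟩
      · intro i hi
        interval_cases i
        · exact h0
        · exact hkl
      · intro i hi
        interval_cases i
        exact hfe
    · -- k = 1, l ≥ 2 : cycle
      exfalso
      apply hnc
      refine cycle_of_chord h2 (by omega) (a := es 0) (h1.1 0 (by omega)).1 ?_ ?_ ?_
      · rw [hfe]; exact (h2.1 0 (by omega)).2.2
      · rw [← hkl, hk1]
        exact (h1.1 0 (by omega)).2.2
      · intro t ht1 ht2 hcon
        rw [hfe] at hcon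
        have := h2.2.2 0 (by omega) t (by omega) hcon
        omega
  · by_cases hl1 : l = 1
    · -- l = 1, k ≥ 2 : cycle
      exfalso
      apply hnc
      refine cycle_of_chord h1 (by omega) (a := fs 0) (h2.1 0 (by omega)).1 ?_ ?_ ?_
      · rw [← hfe]; exact (h1.1 0 (by omega)).2.2
      · rw [hkl, hl1]
        exact (h2.1 0 (by omega)).2.2
      · intro t ht1 ht2 hcon
        rw [← hfe] at hcon
        have := h1.2.2 0 (by omega) t (by omega) hcon
        omega
    · -- k, l ≥ 2
      exfalso
      have h2' : NIWalk E l (fun t => if t = 0 then vs 1 else ws t) fs := by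
        refine ⟨fun i hi => ?_, fun i hi j hj hv => ?_, h2.2.2⟩
        · dsimp only
          by_cases hi0 : i = 0
          · subst hi0
            rw [if_pos rfl, if_neg (by omega : ¬ (0 + 1 = 0))]
            refine ⟨(h2.1 0 (by omega)).1, ?_, (h2.1 0 (by omega)).2.2⟩
            rw [← hfe]
            exact (h1.1 0 (by omega)).2.2
          · rw [if_neg hi0, if_neg (by omega : ¬ i + 1 = 0)]
            exact h2.1 i hi
        · dsimp only at hv
          by_cases hi0 : i = 0 <;> by_cases hj0 : j = 0
          · omega
          · rw [if_pos hi0, if_neg hj0] at hv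
            have := hstar 1 (by omega) j hj hv
            omega
          · rw [if_neg hi0, if_pos hj0] at hv
            have := hstar 1 (by omega) i hi hv.symm
            omega
          · rw [if_neg hi0, if_neg hj0] at hv
            exact h2.2.1 i hi j hj hv
      have hstart : (fun t => vs (t + 1)) 0 = (fun t => if t = 0 then vs 1 else ws t) 0 := by
        dsimp only
        rw [if_pos rfl]
      have hend : (fun t => vs (t + 1)) (k - 1) = (fun t => if t = 0 then vs 1 else ws t) l := by
        dsimp only
        rw [if_neg (by omega : ¬ l = 0)]
        have e : k - 1 + 1 = k := by omega
        rw [e]; exact hkl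
      have key := IH (k - 1) l (fun t => vs (t + 1)) (fun t => if t = 0 then vs 1 else ws t)
        (fun t => es (t + 1)) fs (by omega) (niwalk_shift h1 (by omega)) h2' hstart hend
      have he := key.2.2 0 (by omega)
      rw [← hfe] at he
      have := h1.2.2 (0 + 1) (by omega) 0 (by omega) he
      omega


omit [DecidableEq I] [Fintype I] in
/-- In a hypergraph with no cycle, injective walks between two fixed vertices are
unique. -/
lemma niwalk_unique (hnc : ¬ HasCycle E) (N : ℕ) :
    ∀ (k l : ℕ) (vs ws : ℕ → I) (es fs : ℕ → Finset I), k + l ≤ N →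
      NIWalk E k vs es → NIWalk E l ws fs → vs 0 = ws 0 → vs k = ws l →
      k = l ∧ (∀ i, i ≤ k → vs i = ws i) ∧ (∀ i, i < k → es i = fs i) := by
  induction N with
  | zero =>
    intro k l vs ws es fs hN h1 h2 h0 hkl
    refine ⟨by omega, fun i hi => ?_, fun i hi => by omega⟩
    have : i = 0 := by omega
    rw [this]; exact h0
  | succ N IH =>
    intro k l vs ws es fs hN h1 h2 h0 hkl
    by_cases hk0 : k = 0
    · subst hk0
      have hl0 : (0 : ℕ) = l := h2.2.1 0 (by omega) l le_rfl (h0.symm.trans hkl)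
      refine ⟨hl0, fun i hi => ?_, fun i hi => by omega⟩
      have : i = 0 := by omega
      rw [this]; exact h0
    · by_cases hl0 : l = 0
      · exfalso
        have hvk : vs k = vs 0 := by rw [hkl, hl0, ← h0]
        have := h1.2.1 k le_rfl 0 (by omega) hvk
        omega
      · -- k, l ≥ 1
        by_cases hmeet : ∃ p, p ≤ k ∧ ∃ q, q ≤ l ∧ vs p = ws q ∧
            ¬(p = 0 ∧ q = 0) ∧ ¬(p = k ∧ q = l)
        · obtain ⟨p, hp, q, hq, hpq, hn0, hnk⟩ := hmeet
          have pre := IH p q vs ws es fs (by omega) (niwalk_prefix h1 hp)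
            (niwalk_prefix h2 hq) h0 hpq
          have hsufs : (fun t => vs (t + p)) (k - p) = (fun t => ws (t + q)) (l - q) := by
            dsimp only
            rw [Nat.sub_add_cancel hp, Nat.sub_add_cancel hq]
            exact hkl
          have hsuf0 : (fun t => vs (t + p)) 0 = (fun t => ws (t + q)) 0 := by
            dsimp only
            rw [Nat.zero_add, Nat.zero_add]
            exact hpq
          have suf := IH (k - p) (l - q) (fun t => vs (t + p)) (fun t => ws (t + q))
            (fun t => es (t + p)) (fun t => fs (t + q)) (by omega)
            (niwalk_shift h1 hp) (niwalk_shift h2 hq) hsuf0 hsufs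
          obtain ⟨hpq', hv1, he1⟩ := pre
          obtain ⟨hkl', hv2, he2⟩ := suf
          refine ⟨by omega, fun i hi => ?_, fun i hi => ?_⟩
          · by_cases h : i ≤ p
            · exact hv1 i h
            · have := hv2 (i - p) (by omega)
              have e1 : i - p + p = i := by omega
              have e2 : i - p + q = i := by omega
              rw [e1, e2] at this
              exact this
          · by_cases h : i < p
            · exact he1 i h
            · have := he2 (i - p) (by omega)
              have e1 : i - p + p = i := by omega
              have e2 : i - p + q = i := by omega
              rw [e1, e2] at this
              exact this
        · have hstar : ∀ p, p ≤ k → ∀ q, q ≤ l → vs p = ws q →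
              (p = 0 ∧ q = 0) ∨ (p = k ∧ q = l) := by
            intro p hp q hq hpq
            by_contra hcon
            push_neg at hcon
            refine hmeet ?_
            exact ⟨p, hp, q, hq, hpq, fun h => hcon.1 h.1 h.2, fun h => hcon.2 h.1 h.2⟩
          by_cases hlast : es (k - 1) = fs (l - 1)
          · -- apply the first-edge helper to the reversed walks
            have h1r := niwalk_reverse h1
            have h2r := niwalk_reverse h2
            have h0r : (fun t => vs (k - t)) 0 = (fun t => ws (l - t)) 0 := by
              dsimp only
              rw [Nat.sub_zero, Nat.sub_zero]
              exact hkl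
            have hklr : (fun t => vs (k - t)) k = (fun t => ws (l - t)) l := by
              dsimp only
              rw [Nat.sub_self, Nat.sub_self]
              exact h0
            have hstarr : ∀ p, p ≤ k → ∀ q, q ≤ l →
                (fun t => vs (k - t)) p = (fun t => ws (l - t)) q →
                (p = 0 ∧ q = 0) ∨ (p = k ∧ q = l) := by
              intro p hp q hq hpq
              dsimp only at hpq
              have := hstar (k - p) (by omega) (l - q) (by omega) hpq
              omega
            have hfer : (fun t => es (k - 1 - t)) 0 = (fun t => fs (l - 1 - t)) 0 := by
              show es (k - 1 - 0) = fs (l - 1 - 0)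
              rw [Nat.sub_zero, Nat.sub_zero]
              exact hlast
            have key := first_edge_aux hnc IH hN h1r h2r (by omega) (by omega) h0r hklr
              hstarr hfer
            obtain ⟨hkeq, hvr, her⟩ := key
            refine ⟨hkeq, fun i hi => ?_, fun i hi => ?_⟩
            · have := hvr (k - i) (by omega)
              have e1 : k - (k - i) = i := by omega
              have e2 : l - (k - i) = i := by omega
              rw [e1, e2] at this
              exact this
            · have := her (k - 1 - i) (by omega)
              have e1 : k - 1 - (k - 1 - i) = i := by omega
              have e2 : l - 1 - (k - 1 - i) = i := by omega
              rw [e1, e2] at this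
              exact this
          · exfalso
            apply hnc
            by_cases hmid : ∃ s, s < k ∧ ∃ t, t < l ∧ es s = fs t
            · classical
              obtain ⟨s, hs, t, ht, hst⟩ := hmid
              have hSne : ((Finset.range k).filter
                  (fun p => ∃ q, q < l ∧ es p = fs q)).Nonempty :=
                ⟨s, by simp only [Finset.mem_filter, Finset.mem_range]; exact ⟨hs, t, ht, hst⟩⟩
              set s0 := ((Finset.range k).filter
                  (fun p => ∃ q, q < l ∧ es p = fs q)).max' hSne with hs0
              have hs0mem := Finset.max'_mem _ hSne
              rw [← hs0] at hs0mem
              simp only [Finset.mem_filter, Finset.mem_range] at hs0mem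
              obtain ⟨hs0k, t0, ht0, hst0⟩ := hs0mem
              have hmax : ∀ p, s0 < p → p < k → ∀ q, q < l → es p ≠ fs q := by
                intro p hp1 hp2 q hq hcon
                have hmem : p ∈ (Finset.range k).filter
                    (fun p => ∃ q, q < l ∧ es p = fs q) := by
                  simp only [Finset.mem_filter, Finset.mem_range]
                  exact ⟨hp2, q, hq, hcon⟩
                have := Finset.le_max' _ p hmem
                omega
              have hlast' : ¬(s0 = k - 1 ∧ t0 = l - 1) := by
                rintro ⟨h4, h5⟩
                rw [h4, h5] at hst0
                exact hlast hst0
              exact cycle_mid h1 h2 (by omega) (by omega) hkl hstar hs0k ht0 hst0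
                hmax hlast'
            · push_neg at hmid
              exact cycle_disjoint h1 h2 (by omega) (by omega) h0 hkl hstar hmid



end WalkAux

section TreeAux

variable {I : Type*} [DecidableEq I] [Fintype I] {E : Finset (Finset I)}

lemma niwalk_of_isWalk_inj {k : ℕ} {vs : Fin (k + 1) → I} {es : Fin k → Finset I}
    (hw : IsWalk E k vs es) (hvi : Function.Injective vs) (hei : Function.Injective es) :
    NIWalk E k (fun i => vs ⟨min i k, by omega⟩)
      (fun i => if h' : i < k then es ⟨i, h'⟩ else ∅) := by
  refine ⟨nwalk_of_isWalk hw, fun i hi j hj hv => ?_, fun i hi j hj he => ?_⟩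
  · have h2 := congrArg Fin.val (hvi hv)
    simp only at h2
    omega
  · dsimp only at he
    rw [dif_pos hi, dif_pos hj] at he
    have h2 := congrArg Fin.val (hei he)
    simpa using h2

/-- Every vertex lies in some edge. -/
lemma degree_pos (hT : IsHypertree E) (hcard : 2 ≤ Fintype.card I) (v : I) :
    ∃ a ∈ E, v ∈ a := by
  obtain ⟨u, hu⟩ := Fintype.exists_ne_of_one_lt_card (by omega) v
  obtain ⟨k, vs, es, hw, h0, hl⟩ := hT.2.2.1 v u
  rcases Nat.eq_zero_or_pos k with hk | hk
  · exfalso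
    apply hu
    subst hk
    rw [← hl, ← h0]
    rfl
  · refine ⟨es ⟨0, hk⟩, hw.1 _, ?_⟩
    have := (hw.2 ⟨0, hk⟩).1
    have e : (⟨0, hk⟩ : Fin k).castSucc = 0 := by ext; rfl
    rw [e, h0] at this
    exact this

/-- Unique outgoing edge for `v ≠ r` in a hypertree. -/
lemma outgoing_existsUnique (hT : IsHypertree E) {r v : I} (hvr : v ≠ r) :
    ∃! a, OutgoingEdge E r v a := by
  obtain ⟨k, vs, es, hw, h0, hl⟩ := hT.2.2.1 v r
  have hnw := nwalk_of_isWalk hw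
  obtain ⟨k', vs', es', hni, h0', hk'⟩ := exists_niwalk hnw
  have h0v : vs' 0 = v := by
    rw [h0']
    rw [show ((⟨min 0 k, by omega⟩ : Fin (k+1))) = 0 from by ext; simp]
    exact h0
  have hkr : vs' k' = r := by
    rw [hk']
    rw [show ((⟨min k k, by omega⟩ : Fin (k+1))) = Fin.last k from by ext; simp]
    exact hl
  have hkpos : 0 < k' := by
    rcases Nat.eq_zero_or_pos k' with h | h
    · exfalso; apply hvr; rw [← h0v, ← hkr, h]
    · exact h
  have hout : OutgoingEdge E r v (es' 0) := by
    refine ⟨hvr, k', (fun i : Fin (k' + 1) => vs' i), (fun i : Fin k' => es' i),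
      isWalk_of_nwalk hni.1, h0v, by simpa using hkr, ?_, ?_, hkpos, rfl⟩
    · intro i j hij
      exact Fin.ext (hni.2.1 i (by omega) j (by omega) hij)
    · intro i j hij
      exact Fin.ext (hni.2.2 i i.2 j j.2 hij)
  refine ⟨es' 0, hout, ?_⟩
  -- uniqueness
  intro b hb
  obtain ⟨-, l, ws, fs, hwb, hb0, hbl, hbvi, hbei, hlpos, hbe⟩ := hb
  have hnb := niwalk_of_isWalk_inj hwb hbvi hbei
  have hstart : (fun i => ws (⟨min i l, by omega⟩ : Fin (l + 1))) 0 = vs' 0 := by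
    dsimp only
    rw [show ((⟨min 0 l, by omega⟩ : Fin (l + 1))) = 0 from by ext; simp]
    rw [hb0, h0v]
  have hend : (fun i => ws (⟨min i l, by omega⟩ : Fin (l + 1))) l = vs' k' := by
    dsimp only
    rw [show ((⟨min l l, by omega⟩ : Fin (l + 1))) = Fin.last l from by ext; simp]
    rw [hbl, hkr]
  have key := niwalk_unique hT.2.2.2 (l + k') l k' _ _ _ _ le_rfl hnb hni hstart hend
  have he0 := key.2.2 0 (by omega)
  rw [dif_pos hlpos] at he0
  rw [← hbe]
  exact he0

end TreeAux

section ListCount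

variable {α : Type*} [Fintype α] [DecidableEq α]

lemma lists_bijective :
    Function.Bijective (fun e : Fin (Fintype.card α) ≃ α =>
      (⟨List.ofFn e, (List.nodup_ofFn).mpr e.injective,
          fun a => (List.mem_ofFn (a := a)).mpr ⟨e.symm a, by simp⟩⟩ :
        {l : List α // l.Nodup ∧ ∀ a, a ∈ l})) := by
  constructor
  · intro e e' h
    have := congrArg Subtype.val h
    dsimp only at this
    exact Equiv.coe_fn_injective (List.ofFn_injective this)
  · rintro ⟨l, hnd, hc⟩
    have huniv : l.toFinset = Finset.univ := Finset.eq_univ_iff_forall.mpr (by simpa using hc)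
    have hlen : Fintype.card α = l.length := by
      have := congrArg Finset.card huniv
      rw [List.toFinset_card_of_nodup hnd, Finset.card_univ] at this
      omega
    have hinj : Function.Injective (fun i : Fin (Fintype.card α) => l.get (Fin.cast hlen i)) := by
      intro i j hij
      have := (List.nodup_iff_injective_get).mp hnd hij
      simpa [Fin.ext_iff] using this
    have hsurj : Function.Surjective (fun i : Fin (Fintype.card α) => l.get (Fin.cast hlen i)) := by
      intro a
      obtain ⟨i, hi⟩ := List.mem_iff_get.mp (hc a)
      exact ⟨Fin.cast hlen.symm i, by simpa using hi⟩
    refine ⟨Equiv.ofBijective _ ⟨hinj, hsurj⟩, ?_⟩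
    apply Subtype.ext
    dsimp only
    apply List.ext_get (by simp [← hlen])
    intro i h1 h2
    simp [Equiv.ofBijective, List.get_ofFn]

instance lists_finite : Finite {l : List α // l.Nodup ∧ ∀ a, a ∈ l} :=
  Finite.of_surjective _ lists_bijective.2

lemma card_lists : Nat.card {l : List α // l.Nodup ∧ ∀ a, a ∈ l} = Nat.factorial (Fintype.card α) := by
  rw [← Nat.card_eq_of_bijective _ lists_bijective, Nat.card_eq_fintype_card,
    Fintype.card_equiv (Fintype.equivFin α).symm, Fintype.card_fin]

end ListCount

section CyclicCount

variable {β : Type*} [Fintype β] [DecidableEq β]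

lemma pow_mod_apply {σ : Equiv.Perm β} {b₀ : β} {p : ℕ} (hp0 : 0 < p)
    (hp : (σ ^ p) b₀ = b₀) : ∀ m, (σ ^ m) b₀ = (σ ^ (m % p)) b₀ := by
  intro m
  induction m using Nat.strong_induction_on with
  | _ m IH =>
  by_cases h : m < p
  · rw [Nat.mod_eq_of_lt h]
  · have e : m = m - p + p := by omega
    have e2 : m % p = (m - p) % p := by
      conv_lhs => rw [e]
      rw [Nat.add_mod_right]
    conv_lhs => rw [e]
    rw [pow_add, Equiv.Perm.mul_apply, hp, IH (m - p) (by omega), e2]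

lemma no_small_period {σ : Equiv.Perm β} (h : IsCyclicPerm σ) (b₀ : β) {p : ℕ}
    (hp0 : 0 < p) (hpd : p < Fintype.card β) (hp : (σ ^ p) b₀ = b₀) : False := by
  have himg : (Finset.range p).image (fun t => (σ ^ t) b₀) = Finset.univ := by
    apply Finset.eq_univ_iff_forall.mpr
    intro b
    obtain ⟨m, hm⟩ := h b₀ b
    refine Finset.mem_image.mpr ⟨m % p, Finset.mem_range.mpr (Nat.mod_lt _ hp0), ?_⟩
    rw [← pow_mod_apply hp0 hp m, hm]
  have h1 : Fintype.card β ≤ p := by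
    calc Fintype.card β = ((Finset.range p).image (fun t => (σ ^ t) b₀)).card := by
          rw [himg, Finset.card_univ]
      _ ≤ (Finset.range p).card := Finset.card_image_le
      _ = p := Finset.card_range p
  omega

lemma orbit_injOn {σ : Equiv.Perm β} (h : IsCyclicPerm σ) (b₀ : β) :
    ∀ i < Fintype.card β, ∀ j < Fintype.card β, (σ ^ i) b₀ = (σ ^ j) b₀ → i = j := by
  have key : ∀ i j, i < j → j < Fintype.card β → (σ ^ i) b₀ = (σ ^ j) b₀ → False := by
    intro i j hij hj hv
    have : (σ ^ i) ((σ ^ (j - i)) b₀) = (σ ^ i) b₀ := by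
      rw [← Equiv.Perm.mul_apply, ← pow_add]
      have e : i + (j - i) = j := by omega
      rw [e, hv]
    have hper := (σ ^ i).injective this
    exact no_small_period h b₀ (by omega) (by omega) hper
  intro i hi j hj hv
  rcases lt_trichotomy i j with hlt | he | hlt
  · exact absurd hv (fun hv => key i j hlt hj hv)
  · exact he
  · exact absurd hv.symm (fun hv => key j i hlt hi hv)

lemma orbit_card_pow {σ : Equiv.Perm β} (h : IsCyclicPerm σ) (b₀ : β) :
    (σ ^ Fintype.card β) b₀ = b₀ := by
  have hd : 0 < Fintype.card β := Fintype.card_pos_iff.mpr ⟨b₀⟩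
  have hmaps : ∀ m ∈ Finset.range (Fintype.card β + 1),
      (σ ^ m) b₀ ∈ (Finset.univ : Finset β) := fun _ _ => Finset.mem_univ _
  obtain ⟨i, hi, j, hj, hne, hv⟩ := Finset.exists_ne_map_eq_of_card_lt_of_maps_to
    (by rw [Finset.card_range, Finset.card_univ]; omega) hmaps
  rw [Finset.mem_range] at hi hj
  -- wlog i < j
  have key : ∀ i j, i < j → j < Fintype.card β + 1 → (σ ^ i) b₀ = (σ ^ j) b₀ →
      (σ ^ Fintype.card β) b₀ = b₀ := by
    intro i j hij hj hv
    have : (σ ^ i) ((σ ^ (j - i)) b₀) = (σ ^ i) b₀ := by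
      rw [← Equiv.Perm.mul_apply, ← pow_add]
      have e : i + (j - i) = j := by omega
      rw [e, hv]
    have hper := (σ ^ i).injective this
    rcases lt_trichotomy (j - i) (Fintype.card β) with h1 | h1 | h1
    · exact absurd hper (fun hper => no_small_period h b₀ (by omega) h1 hper)
    · rwa [← h1]
    · omega
  rcases lt_trichotomy i j with hlt | he | hlt
  · exact key i j hlt hj hv
  · omega
  · exact key j i hlt hi hv.symm

/-- The orbit enumeration of a cyclic permutation, omitting the basepoint. -/
noncomputable def orbitList (b₀ : β) (σ : {σ : Equiv.Perm β // IsCyclicPerm σ})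
    (i : Fin (Fintype.card β - 1)) : {b : β // b ≠ b₀} :=
  ⟨(σ.1 ^ ((i : ℕ) + 1)) b₀, by
    intro hcon
    have h2 : (0 : ℕ) < Fintype.card β := by have := i.2; omega
    have : (i : ℕ) + 1 = 0 := orbit_injOn σ.2 b₀ ((i : ℕ) + 1) (by have := i.2; omega)
      0 h2 (by simpa using hcon)
    omega⟩

@[simp] lemma orbitList_val (b₀ : β) (σ : {σ : Equiv.Perm β // IsCyclicPerm σ})
    (i : Fin (Fintype.card β - 1)) :
    (orbitList b₀ σ i).val = (σ.1 ^ ((i : ℕ) + 1)) b₀ := rfl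

/-- The cyclic permutations of `β` are in bijection with complete nodup lists on the
complement of a fixed basepoint. -/
noncomputable def cyclicToList (b₀ : β) (σ : {σ : Equiv.Perm β // IsCyclicPerm σ}) :
    {l : List {b : β // b ≠ b₀} // l.Nodup ∧ ∀ a, a ∈ l} := by
  refine ⟨List.ofFn (orbitList b₀ σ), ?_, ?_⟩
  · rw [List.nodup_ofFn]
    intro i j hij
    have h1 : (σ.1 ^ ((i : ℕ) + 1)) b₀ = (σ.1 ^ ((j : ℕ) + 1)) b₀ :=
      congrArg Subtype.val hij
    have := orbit_injOn σ.2 b₀ ((i : ℕ) + 1) (by have := i.2; omega)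
      ((j : ℕ) + 1) (by have := j.2; omega) h1
    exact Fin.ext (by omega)
  · rintro ⟨b, hb⟩
    obtain ⟨m, hm⟩ := σ.2 b₀ b
    have hd : 0 < Fintype.card β := Fintype.card_pos_iff.mpr ⟨b₀⟩
    have hm' : (σ.1 ^ (m % Fintype.card β)) b₀ = b := by
      rw [← pow_mod_apply hd (orbit_card_pow σ.2 b₀) m, hm]
    have hne : m % Fintype.card β ≠ 0 := by
      intro hcon
      rw [hcon] at hm'
      simp at hm'
      exact hb hm'.symm
    rw [List.mem_ofFn]
    refine ⟨⟨m % Fintype.card β - 1, by have := Nat.mod_lt m hd; omega⟩, ?_⟩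
    apply Subtype.ext
    rw [orbitList_val]
    dsimp only
    have e : m % Fintype.card β - 1 + 1 = m % Fintype.card β := by omega
    rw [e, hm']

lemma cyclicToList_injective (b₀ : β) : Function.Injective (cyclicToList b₀) := by
  intro σ τ h
  have hd : 0 < Fintype.card β := Fintype.card_pos_iff.mpr ⟨b₀⟩
  have hlist : List.ofFn (orbitList b₀ σ) = List.ofFn (orbitList b₀ τ) := by
    have := congrArg Subtype.val h
    simpa [cyclicToList] using this
  have horb : ∀ i, i ≤ Fintype.card β - 1 → (σ.1 ^ i) b₀ = (τ.1 ^ i) b₀ := by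
    intro i hi
    rcases Nat.eq_zero_or_pos i with h0 | h0
    · rw [h0]; simp
    · have hii : i - 1 < Fintype.card β - 1 := by omega
      have hget := congrFun (List.ofFn_injective hlist) ⟨i - 1, hii⟩
      have h2 := congrArg Subtype.val hget
      rw [orbitList_val, orbitList_val] at h2
      dsimp only at h2
      have e : i - 1 + 1 = i := by omega
      rwa [e] at h2
  apply Subtype.ext
  apply Equiv.ext
  intro b
  obtain ⟨m, hm⟩ := σ.2 b₀ b
  have hm' : (σ.1 ^ (m % Fintype.card β)) b₀ = b := by
    rw [← pow_mod_apply hd (orbit_card_pow σ.2 b₀) m, hm]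
  set i := m % Fintype.card β with hidef
  have hilt : i < Fintype.card β := Nat.mod_lt m hd
  have hstep : σ.1 b = (σ.1 ^ (i + 1)) b₀ := by
    rw [← hm', ← Equiv.Perm.mul_apply, ← pow_succ']
  by_cases hlast : i = Fintype.card β - 1
  · rw [hstep]
    have e : i + 1 = Fintype.card β := by omega
    rw [e, orbit_card_pow σ.2 b₀]
    have hb' : (τ.1 ^ i) b₀ = b := by rw [← horb i (by omega), hm']
    rw [← hb', ← Equiv.Perm.mul_apply, ← pow_succ', e, orbit_card_pow τ.2 b₀]
  · rw [hstep, horb (i + 1) (by omega)]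
    have hb' : (τ.1 ^ i) b₀ = b := by rw [← horb i (by omega), hm']
    rw [← hb', ← Equiv.Perm.mul_apply, ← pow_succ']

open Fin.NatCast in
lemma cyclicToList_surjective (b₀ : β) : Function.Surjective (cyclicToList b₀) := by
  rintro ⟨l, hnd, hc⟩
  have hd : 0 < Fintype.card β := Fintype.card_pos_iff.mpr ⟨b₀⟩
  obtain ⟨d, hdeq⟩ : ∃ d, Fintype.card β = d + 1 := ⟨Fintype.card β - 1, by omega⟩
  -- length of l
  have huniv : l.toFinset = Finset.univ := Finset.eq_univ_iff_forall.mpr (by simpa using hc)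
  have hlen : l.length = d := by
    have h1 := congrArg Finset.card huniv
    rw [List.toFinset_card_of_nodup hnd, Finset.card_univ, Fintype.card_subtype_compl,
      Fintype.card_subtype_eq] at h1
    omega
  -- the enumeration of β
  set e : Fin (d + 1) → β := fun i => if h : (i : ℕ) = 0 then b₀
    else (l.get ⟨(i : ℕ) - 1, by omega⟩).val with he
  have hebij : Function.Bijective e := by
    constructor
    · intro i j hij
      simp only [he] at hij
      by_cases hi0 : (i : ℕ) = 0 <;> by_cases hj0 : (j : ℕ) = 0
      · exact Fin.ext (by omega)
      · rw [dif_pos hi0, dif_neg hj0] at hij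
        exact absurd hij.symm (l.get _).2
      · rw [dif_neg hi0, dif_pos hj0] at hij
        exact absurd hij (l.get _).2
      · rw [dif_neg hi0, dif_neg hj0] at hij
        have := (List.nodup_iff_injective_get).mp hnd (Subtype.ext hij)
        have := congrArg Fin.val this
        simp only at this
        exact Fin.ext (by omega)
    · intro b
      by_cases hb : b = b₀
      · exact ⟨0, by simp [he, hb]⟩
      · obtain ⟨i, hi⟩ := List.mem_iff_get.mp (hc ⟨b, hb⟩)
        refine ⟨⟨(i : ℕ) + 1, by omega⟩, ?_⟩
        simp only [he]
        rw [dif_neg (by omega : ¬ ((i : ℕ) + 1) = 0)]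
        have : ((i : ℕ) + 1 - 1) = (i : ℕ) := by omega
        simp only [this]
        rw [show (⟨(i : ℕ), by omega⟩ : Fin l.length) = i from Fin.ext rfl, hi]
  set eq : Fin (d + 1) ≃ β := Equiv.ofBijective e hebij with heq
  set σ : Equiv.Perm β := (eq.symm.trans (finRotate (d + 1))).trans eq with hσ
  have hσpow : ∀ (m : ℕ) (x : β), (σ ^ m) x = eq (eq.symm x + (m : Fin (d + 1))) := by
    intro m
    induction m with
    | zero => intro x; simp
    | succ m IH =>
      intro x
      rw [pow_succ', Equiv.Perm.mul_apply, IH]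
      simp only [hσ, Equiv.trans_apply, Equiv.symm_apply_apply]
      congr 1
      rw [finRotate_succ_apply]
      push_cast
      simp only [Nat.cast_succ, add_assoc]
  have hσcyc : IsCyclicPerm σ := by
    intro x y
    refine ⟨(eq.symm y - eq.symm x : Fin (d + 1)).val, ?_⟩
    rw [hσpow, Fin.cast_val_eq_self]
    rw [add_sub_cancel]
    exact eq.apply_symm_apply y
  have heq0 : eq.symm b₀ = 0 := by
    apply eq.injective
    rw [Equiv.apply_symm_apply]
    show b₀ = e 0
    simp [he]
  refine ⟨⟨σ, hσcyc⟩, ?_⟩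
  apply Subtype.ext
  dsimp only [cyclicToList]
  apply List.ext_get (by simp [hlen]; omega)
  intro i h1 h2
  apply Subtype.ext
  rw [List.get_ofFn, orbitList_val]
  rw [hσpow, heq0, zero_add]
  have hi : i < d := by rw [hlen] at h2; exact h2
  have hval : ((Fin.cast List.length_ofFn ⟨i, h1⟩ : Fin (Fintype.card β - 1)) : ℕ) = i := rfl
  rw [hval]
  have hcast : (((i + 1 : ℕ)) : Fin (d + 1)) = ⟨i + 1, by omega⟩ := by
    apply Fin.ext
    rw [Fin.val_natCast]
    exact Nat.mod_eq_of_lt (by omega)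
  rw [hcast]
  show e ⟨i + 1, by omega⟩ = _
  simp only [he]
  rw [dif_neg (by omega : ¬ (i + 1) = 0)]
  have hfin : (⟨i + 1 - 1, by omega⟩ : Fin l.length) = ⟨i, h2⟩ := Fin.ext (Nat.succ_sub_one i)
  rw [hfin]



lemma card_cyclic [Nonempty β] :
    Nat.card {σ : Equiv.Perm β // IsCyclicPerm σ} =
      Nat.factorial (Fintype.card β - 1) := by
  have b₀ : β := Classical.arbitrary β
  have hbij : Function.Bijective (cyclicToList b₀) :=
    ⟨cyclicToList_injective b₀, cyclicToList_surjective b₀⟩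
  rw [Nat.card_eq_of_bijective _ hbij, card_lists]
  congr 1
  rw [Fintype.card_subtype_compl, Fintype.card_subtype_eq]

end CyclicCount

lemma card_lists' {α : Type*} [Finite α] :
    Nat.card {l : List α // l.Nodup ∧ ∀ a, a ∈ l} = Nat.factorial (Nat.card α) := by
  letI := Fintype.ofFinite α
  letI := Classical.decEq α
  rw [card_lists, Nat.card_eq_fintype_card]

lemma natCard_sigma {ι : Type*} [Fintype ι] {f : ι → Type*} [∀ i, Finite (f i)] :
    Nat.card (Σ i, f i) = ∑ i, Nat.card (f i) := by
  letI : ∀ i, Fintype (f i) := fun i => Fintype.ofFinite _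
  simp only [Nat.card_eq_fintype_card, Fintype.card_sigma]

instance lists_finite' {α : Type*} [Finite α] :
    Finite {l : List α // l.Nodup ∧ ∀ a, a ∈ l} := by
  letI := Fintype.ofFinite α
  letI := Classical.decEq α
  exact Finite.of_surjective _ lists_bijective.2

section Assembly

variable {I : Type*} [DecidableEq I] [Fintype I] {E : Finset (Finset I)}

/-- Degree of a vertex in a hypergraph. -/
def hdeg (E : Finset (Finset I)) (v : I) : ℕ := (E.filter (fun a => v ∈ a)).card

lemma card_edges_at (E : Finset (Finset I)) (v : I) :
    Nat.card {a : Finset I // a ∈ E ∧ v ∈ a} = hdeg E v := by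
  rw [Nat.card_eq_fintype_card, Fintype.card_subtype]
  congr 1
  ext a
  simp [hdeg]

lemma outgoing_mem {r v : I} {a : Finset I} (h : OutgoingEdge E r v a) : a ∈ E ∧ v ∈ a := by
  obtain ⟨hvr, k, vs, es, hw, h0, hl, hvi, hei, hk, ha⟩ := h
  subst ha
  refine ⟨hw.1 _, ?_⟩
  have h2 := (hw.2 ⟨0, hk⟩).1
  rw [show (⟨0, hk⟩ : Fin k).castSucc = 0 from by ext; rfl, h0] at h2
  exact h2

lemma nonempty_edges_at (hT : IsHypertree E) (hcard : 2 ≤ Fintype.card I) (v : I) :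
    Nonempty {a : Finset I // a ∈ E ∧ v ∈ a} :=
  let ⟨a, ha, hva⟩ := degree_pos hT hcard v
  ⟨⟨a, ha, hva⟩⟩

lemma card_entering_eq (hT : IsHypertree E) (r v : I) (hvr : v ≠ r) :
    Nat.card {a : Finset I // EnteringEdge E r v a} = hdeg E v - 1 := by
  obtain ⟨a₀, ha₀, huniq⟩ := outgoing_existsUnique hT hvr
  have key : ∀ a, EnteringEdge E r v a ↔ a ∈ (E.filter (fun x => v ∈ x)).erase a₀ := by
    intro a
    rw [Finset.mem_erase, Finset.mem_filter]
    constructor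
    · rintro ⟨h1, h2, h3⟩
      exact ⟨fun hcon => h3 (hcon ▸ ha₀), h1, h2⟩
    · rintro ⟨h1, h2, h3⟩
      exact ⟨h2, h3, fun hcon => h1 (huniq a hcon)⟩
  have hmem : a₀ ∈ E.filter (fun x => v ∈ x) :=
    Finset.mem_filter.mpr ⟨(outgoing_mem ha₀).1, (outgoing_mem ha₀).2⟩
  rw [Nat.card_congr (Equiv.subtypeEquivRight key), Nat.card_eq_finsetCard,
    Finset.card_erase_of_mem hmem]
  rfl

lemma card_entering_root_eq (r : I) :
    Nat.card {a : Finset I // EnteringEdge E r r a} = hdeg E r := by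
  have key : ∀ a, EnteringEdge E r r a ↔ a ∈ E ∧ r ∈ a := fun a =>
    ⟨fun h => ⟨h.1, h.2.1⟩, fun h => ⟨h.1, h.2, fun hcon => hcon.1 rfl⟩⟩
  rw [Nat.card_congr (Equiv.subtypeEquivRight key), card_edges_at]

lemma card_flags (E : Finset (Finset I)) :
    Nat.card {q : I × Finset I // q.2 ∈ E ∧ q.1 ∈ q.2} = ∑ v : I, hdeg E v := by
  have eqv : {q : I × Finset I // q.2 ∈ E ∧ q.1 ∈ q.2} ≃
      Σ v : I, {a : Finset I // a ∈ E ∧ v ∈ a} :=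
    { toFun := fun x => ⟨x.1.1, ⟨x.1.2, x.2.1, x.2.2⟩⟩
      invFun := fun y => ⟨(y.1, y.2.1), y.2.2.1, y.2.2.2⟩
      left_inv := fun x => rfl
      right_inv := fun y => rfl }
  rw [Nat.card_congr eqv, natCard_sigma]
  exact Finset.sum_congr rfl fun v _ => card_edges_at E v

end Assembly

/-- For `n ≥ 2`, `k ≥ 1`: the number of pairs (cyclic hypertree on `{1,…,n}` with `k`
edges, flag) equals the number of ordered rooted hypertrees on `{1,…,n}` with `k`
edges. -/
theorem flagged_cyclic_eq_ordered_rooted (n k : ℕ) (hn : 2 ≤ n) (hk : 1 ≤ k) :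
    Nat.card {p : CyclicHT (Fin n) × (Fin n × Finset (Fin n)) //
        p.1.1.1.card = k ∧ p.2.2 ∈ p.1.1.1 ∧ p.2.1 ∈ p.2.2}
      = Nat.card {o : OrderedRootedHT (Fin n) // o.1.1.card = k} := by
  classical
  have hcard : 2 ≤ Fintype.card (Fin n) := by simpa using hn
  have ΦL : {p : CyclicHT (Fin n) × (Fin n × Finset (Fin n)) //
        p.1.1.1.card = k ∧ p.2.2 ∈ p.1.1.1 ∧ p.2.1 ∈ p.2.2} ≃
      Σ T : {T : HypertreeOn (Fin n) // T.1.card = k},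
        (∀ v : Fin n, {σ : Equiv.Perm {a : Finset (Fin n) // a ∈ T.1.1 ∧ v ∈ a} //
            IsCyclicPerm σ}) ×
          {q : Fin n × Finset (Fin n) // q.2 ∈ T.1.1 ∧ q.1 ∈ q.2} :=
    { toFun := fun x => ⟨⟨x.1.1.1, x.2.1⟩,
        (fun v => ⟨x.1.1.2.1 v, x.1.1.2.2 v⟩, ⟨x.1.2, x.2.2.1, x.2.2.2⟩)⟩
      invFun := fun y => ⟨⟨⟨y.1.1, ⟨fun v => (y.2.1 v).1, fun v => (y.2.1 v).2⟩⟩,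
        y.2.2.1⟩, ⟨y.1.2, y.2.2.2.1, y.2.2.2.2⟩⟩
      left_inv := fun x => rfl
      right_inv := fun y => rfl }
  have ΨR : {o : OrderedRootedHT (Fin n) // o.1.1.card = k} ≃
      Σ T : {T : HypertreeOn (Fin n) // T.1.card = k}, Σ r : Fin n,
        ∀ v : Fin n, {l : List {a : Finset (Fin n) // EnteringEdge T.1.1 r v a} //
          l.Nodup ∧ ∀ a, a ∈ l} :=
    { toFun := fun x => ⟨⟨x.1.1, x.2⟩, x.1.2.1, x.1.2.2⟩
      invFun := fun y => ⟨⟨y.1.1, y.2.1, y.2.2⟩, y.1.2⟩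
      left_inv := fun x => rfl
      right_inv := fun y => rfl }
  rw [Nat.card_congr ΦL, Nat.card_congr ΨR, natCard_sigma, natCard_sigma]
  apply Finset.sum_congr rfl
  intro T _
  have hT : IsHypertree T.1.1 := T.1.2
  have hdpos : ∀ v : Fin n, 1 ≤ hdeg T.1.1 v := by
    intro v
    obtain ⟨a, ha, hva⟩ := degree_pos hT hcard v
    exact Finset.card_pos.mpr ⟨a, Finset.mem_filter.mpr ⟨ha, hva⟩⟩
  -- LHS fiber
  rw [Nat.card_prod, Nat.card_pi, card_flags]
  have hcyc : ∀ v : Fin n,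
      Nat.card {σ : Equiv.Perm {a : Finset (Fin n) // a ∈ T.1.1 ∧ v ∈ a} //
        IsCyclicPerm σ} = Nat.factorial (hdeg T.1.1 v - 1) := by
    intro v
    haveI : Nonempty {a : Finset (Fin n) // a ∈ T.1.1 ∧ v ∈ a} :=
      nonempty_edges_at hT hcard v
    rw [card_cyclic]
    congr 1
    rw [← Nat.card_eq_fintype_card, card_edges_at]
  -- RHS fiber
  rw [natCard_sigma]
  have hR : ∀ r : Fin n,
      Nat.card (∀ v : Fin n, {l : List {a : Finset (Fin n) //
          EnteringEdge T.1.1 r v a} // l.Nodup ∧ ∀ a, a ∈ l}) =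
        hdeg T.1.1 r * ∏ v : Fin n, Nat.factorial (hdeg T.1.1 v - 1) := by
    intro r
    rw [Nat.card_pi]
    have hfac : ∀ v : Fin n,
        Nat.card {l : List {a : Finset (Fin n) // EnteringEdge T.1.1 r v a} //
          l.Nodup ∧ ∀ a, a ∈ l} =
        Nat.factorial (if v = r then hdeg T.1.1 v else hdeg T.1.1 v - 1) := by
      intro v
      rw [card_lists']
      congr 1
      by_cases hvr : v = r
      · rw [if_pos hvr]
        subst hvr
        exact card_entering_root_eq v
      · rw [if_neg hvr]
        exact card_entering_eq hT r v hvr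
    rw [Finset.prod_congr rfl fun v _ => hfac v]
    rw [← Finset.mul_prod_erase Finset.univ _ (Finset.mem_univ r), if_pos rfl]
    rw [← Finset.mul_prod_erase Finset.univ
      (fun v => Nat.factorial (hdeg T.1.1 v - 1)) (Finset.mem_univ r)]
    rw [Finset.prod_congr rfl fun v hv =>
      congrArg Nat.factorial (if_neg (Finset.mem_erase.mp hv).1)]
    rw [← mul_assoc, Nat.mul_factorial_pred (Nat.pos_iff_ne_zero.mp (hdpos r))]
  rw [Finset.sum_congr rfl fun r _ => hR r, ← Finset.sum_mul,
    Finset.prod_congr rfl fun v _ => hcyc v]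
  ring
end

section
/- For every integer n ≥ 1, the characteristic polynomial of the poset F_n of rooted forests on {1,…,n} satisfies Σ_{F ∈ F_n} μ(0̂,F)·s^{(n−1)−|E_F|} = (s−n)^{n−1} in ℤ[s], where E_F is the edge set of F and 0̂ is the empty forest. -/
/-- A rooted forest on `I`: a set `E` of oriented edges `(b, a)` (from `b` toward its
parent `a`) with `b ≠ a`, such that every vertex is the source of at most one edge and
the graph contains no cycle (equivalently, no closed walk of positive length following
the orientations). -/
def IsRootedForest {I : Type*} (E : Finset (I × I)) : Prop :=
  (∀ e ∈ E, e.1 ≠ e.2) ∧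
  (∀ e ∈ E, ∀ e' ∈ E, e.1 = e'.1 → e = e') ∧
  ¬ ∃ (k : ℕ) (f : Fin (k + 2) → I), f (Fin.last (k + 1)) = f 0 ∧
      ∀ i : Fin (k + 1), (f i.castSucc, f i.succ) ∈ E

/-- The poset of rooted forests on `I`, ordered by inclusion of edge sets. -/
abbrev ForestOn (I : Type*) [DecidableEq I] [Fintype I] : Type _ :=
  {E : Finset (I × I) // IsRootedForest E}

/-- The empty rooted forest (the minimum `0̂` of the poset of rooted forests). -/
def emptyForest (I : Type*) [DecidableEq I] [Fintype I] : ForestOn I :=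
  ⟨∅, by simp, by simp, by
    rintro ⟨k, f, -, hw⟩
    exact absurd (hw 0) (Finset.notMem_empty _)⟩

noncomputable instance {I : Type*} [DecidableEq I] [Fintype I] : Fintype (ForestOn I) :=
  Fintype.ofFinite _

namespace ForestAux

variable {I : Type*}

def step (E : Finset (I × I)) (a b : I) : Prop := (a, b) ∈ E

def HasWalk (E : Finset (I × I)) (x y : I) : Prop :=
  ∃ (k : ℕ) (f : Fin (k + 2) → I), f 0 = x ∧ f (Fin.last (k + 1)) = y ∧
    ∀ i : Fin (k + 1), (f i.castSucc, f i.succ) ∈ E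

lemma hasWalk_single {E : Finset (I × I)} {x y : I} (h : (x, y) ∈ E) : HasWalk E x y := by
  refine ⟨0, ![x, y], rfl, rfl, ?_⟩
  intro i
  fin_cases i <;> simpa using h

lemma HasWalk.tail {E : Finset (I × I)} {x y z : I} (h : HasWalk E x y) (hz : (y, z) ∈ E) :
    HasWalk E x z := by
  obtain ⟨k, f, h0, hl, he⟩ := h
  refine ⟨k + 1, Fin.snoc f z, ?_, ?_, ?_⟩
  · rw [show (0 : Fin (k + 3)) = Fin.castSucc 0 from rfl, Fin.snoc_castSucc]; exact h0
  · simp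
  · intro i
    refine Fin.lastCases ?_ ?_ i
    · rw [Fin.succ_last, Fin.snoc_last, Fin.snoc_castSucc, hl]; exact hz
    · intro j
      rw [Fin.succ_castSucc, Fin.snoc_castSucc, Fin.snoc_castSucc]
      exact he j

lemma HasWalk.transGen {E : Finset (I × I)} {x y : I} (h : HasWalk E x y) :
    Relation.TransGen (step E) x y := by
  obtain ⟨k, f, h0, hl, he⟩ := h
  have key : ∀ i : Fin (k + 2), i = 0 ∨ Relation.TransGen (step E) x (f i) := by
    intro i
    induction i using Fin.induction with
    | zero => exact Or.inl rfl
    | succ j ih =>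
      rcases ih with h1 | h1
      · right
        have : f j.castSucc = x := h1 ▸ h0
        exact Relation.TransGen.single (this ▸ he j)
      · right
        exact h1.tail (he j)
  rcases key (Fin.last (k + 1)) with h1 | h1
  · exact absurd h1 (by simp [Fin.ext_iff])
  · exact hl ▸ h1

lemma transGen_hasWalk {E : Finset (I × I)} {x y : I} (h : Relation.TransGen (step E) x y) :
    HasWalk E x y := by
  induction h with
  | single h => exact hasWalk_single h
  | tail _ h ih => exact ih.tail h

lemma acyclic_iff (E : Finset (I × I)) :
    (¬ ∃ (k : ℕ) (f : Fin (k + 2) → I), f (Fin.last (k + 1)) = f 0 ∧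
      ∀ i : Fin (k + 1), (f i.castSucc, f i.succ) ∈ E) ↔
    ∀ x, ¬ Relation.TransGen (step E) x x := by
  constructor
  · rintro hnc x hx
    obtain ⟨k, f, h0, hl, he⟩ := transGen_hasWalk hx
    exact hnc ⟨k, f, hl.trans h0.symm, he⟩
  · rintro hirr ⟨k, f, hcl, he⟩
    exact hirr (f 0) (HasWalk.transGen ⟨k, f, rfl, hcl, he⟩)

lemma _root_.IsRootedForest.irrefl {E : Finset (I × I)} (hF : IsRootedForest E) :
    ∀ x, ¬ Relation.TransGen (step E) x x := (acyclic_iff E).1 hF.2.2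

lemma _root_.IsRootedForest.subset {E E' : Finset (I × I)} (hF : IsRootedForest E) (h : E' ⊆ E) :
    IsRootedForest E' :=
  ⟨fun e he => hF.1 e (h he), fun e he e' he' hee => hF.2.1 e (h he) e' (h he') hee,
    fun ⟨k, f, hc, hw⟩ => hF.2.2 ⟨k, f, hc, fun i => h (hw i)⟩⟩

lemma _root_.IsRootedForest.det {E : Finset (I × I)} (hF : IsRootedForest E) {b c c' : I}
    (h1 : (b, c) ∈ E) (h2 : (b, c') ∈ E) : c = c' :=
  congrArg Prod.snd (hF.2.1 (b, c) h1 (b, c') h2 rfl)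

end ForestAux

namespace ForestAux

variable {I : Type*}
open Relation

def IsRoot (E : Finset (I × I)) (b : I) : Prop := ∀ c, (b, c) ∉ E

lemma _root_.IsRootedForest.wf {E : Finset (I × I)} [Finite I] (hF : IsRootedForest E) :
    WellFounded (fun x y => step E y x) := by
  have ht : IsTrans I (fun x y => Relation.TransGen (step E) y x) :=
    ⟨fun a b c h1 h2 => h2.trans h1⟩
  have hi : IsIrrefl I (fun x y => Relation.TransGen (step E) y x) := ⟨hF.irrefl⟩
  exact Subrelation.wf (fun h => Relation.TransGen.single h)
    (Finite.wellFounded_of_trans_of_irrefl _)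

lemma _root_.IsRootedForest.exists_root {E : Finset (I × I)} [Finite I] (hF : IsRootedForest E)
    (a : I) : ∃ r, ReflTransGen (step E) a r ∧ IsRoot E r := by
  induction a using hF.wf.induction with
  | _ a ih =>
    by_cases h : IsRoot E a
    · exact ⟨a, ReflTransGen.refl, h⟩
    · simp only [IsRoot, not_forall, not_not] at h
      obtain ⟨c, hc⟩ := h
      obtain ⟨r, hr1, hr2⟩ := ih c hc
      exact ⟨r, ReflTransGen.head hc hr1, hr2⟩

lemma _root_.IsRootedForest.root_unique {E : Finset (I × I)} (hF : IsRootedForest E)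
    {a r₁ r₂ : I} (h1 : ReflTransGen (step E) a r₁) (h2 : ReflTransGen (step E) a r₂)
    (hr1 : IsRoot E r₁) (hr2 : IsRoot E r₂) : r₁ = r₂ := by
  induction h1 using ReflTransGen.head_induction_on with
  | refl =>
    rcases h2.cases_head with h | ⟨c, hc, _⟩
    · exact h
    · exact absurd hc (hr1 c)
  | head hac hcr ih =>
    rename_i a' c
    rcases h2.cases_head with h | ⟨c', hc', h2'⟩
    · exact absurd hac (h ▸ hr2 _)
    · exact ih (hF.det hac hc' ▸ h2')

noncomputable def rootOf {E : Finset (I × I)} [Finite I] (hF : IsRootedForest E) (a : I) : I :=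
  (hF.exists_root a).choose

lemma rootOf_spec {E : Finset (I × I)} [Finite I] (hF : IsRootedForest E) (a : I) :
    ReflTransGen (step E) a (rootOf hF a) ∧ IsRoot E (rootOf hF a) :=
  (hF.exists_root a).choose_spec

/-- decompose reachability in `insert (b,a) E`. -/
lemma rtg_insert {E : Finset (I × I)} [DecidableEq (I × I)] {b a u v : I}
    (h : ReflTransGen (step (insert (b, a) E)) u v) :
    ReflTransGen (step E) u v ∨
      (ReflTransGen (step E) u b ∧ ReflTransGen (step E) a v) := by
  induction h with
  | refl => exact Or.inl ReflTransGen.refl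
  | tail _ h ih =>
    rename_i x y _
    rcases Finset.mem_insert.1 h with h' | h'
    · obtain ⟨h1, h2⟩ := Prod.mk.injEq .. ▸ h'
      rcases ih with ih | ⟨ih1, ih2⟩
      · exact Or.inr ⟨h1 ▸ ih, h2 ▸ ReflTransGen.refl⟩
      · exact Or.inr ⟨ih1, h2 ▸ ReflTransGen.refl⟩
    · rcases ih with ih | ⟨ih1, ih2⟩
      · exact Or.inl (ih.tail h')
      · exact Or.inr ⟨ih1, ih2.tail h'⟩

lemma insert_forest_iff {E : Finset (I × I)} [Finite I] [DecidableEq (I × I)]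
    (hF : IsRootedForest E) (b a : I) :
    (IsRootedForest (insert (b, a) E) ∧ (b, a) ∉ E) ↔
      (IsRoot E b ∧ ¬ ReflTransGen (step E) a b) := by
  constructor
  · rintro ⟨hF', hmem⟩
    have hroot : IsRoot E b := by
      intro c hc
      have := hF'.2.1 (b, c) (Finset.mem_insert_of_mem hc) (b, a) (Finset.mem_insert_self _ _) rfl
      exact hmem (this ▸ hc)
    refine ⟨hroot, fun hr => ?_⟩
    exact hF'.irrefl b
      ((Relation.TransGen.single (show step (insert (b,a) E) b a from Finset.mem_insert_self _ _)).trans_left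
        (ReflTransGen.mono (p := step (insert (b,a) E)) (fun x y h => Finset.mem_insert_of_mem h) a b hr))
  · rintro ⟨hroot, hnr⟩
    have hne : b ≠ a := fun h => hnr (h ▸ ReflTransGen.refl)
    have hmem : (b, a) ∉ E := hroot a
    refine ⟨⟨?_, ?_, ?_⟩, hmem⟩
    · intro e he
      rcases Finset.mem_insert.1 he with h | h
      · exact h ▸ hne
      · exact hF.1 e h
    · intro e he e' he' hee
      rcases Finset.mem_insert.1 he with h | h <;> rcases Finset.mem_insert.1 he' with h' | h'
      · rw [h, h']
      · exact absurd (show (b, e'.2) ∈ E from by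
          have : e'.1 = b := by rw [← hee, h]
          rwa [← this, Prod.mk.eta]) (hroot e'.2)
      · exact absurd (show (b, e.2) ∈ E from by
          have : e.1 = b := by rw [hee, h']
          rwa [← this, Prod.mk.eta]) (hroot e.2)
      · exact hF.2.1 e h e' h' hee
    · rw [acyclic_iff]
      intro x hx
      rcases (Relation.transGen_iff _ _ _).1 hx with hxy | ⟨y, hxy, hyx⟩
      · rcases Finset.mem_insert.1 hxy with h | h
        · obtain ⟨h1, h2⟩ := Prod.mk.injEq .. ▸ h
          exact hne (h1.symm.trans h2)
        · exact hF.1 (x, x) h rfl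
      · have hxy' : ReflTransGen (step (insert (b,a) E)) x y := hxy.to_reflTransGen
        rcases Finset.mem_insert.1 hyx with h | h
        · obtain ⟨h1, h2⟩ := Prod.mk.injEq .. ▸ h
          subst h1; subst h2
          rcases rtg_insert hxy' with h' | ⟨h1', _⟩
          · exact hnr h'
          · exact hnr h1'
        · rcases rtg_insert hxy' with h' | ⟨h1', h2'⟩
          · exact hF.irrefl x (Relation.TransGen.tail' h' h)
          · exact hnr ((h2'.tail h).trans h1')

end ForestAux

namespace ForestAux

open Finset Relation

variable {I : Type*} [Fintype I] [DecidableEq I]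

open scoped Classical in
noncomputable def roots (E : Finset (I × I)) : Finset I := univ.filter (fun b => IsRoot E b)

lemma mem_roots {E : Finset (I × I)} {b : I} : b ∈ roots E ↔ IsRoot E b := by
  simp [roots]

lemma card_roots {E : Finset (I × I)} (hF : IsRootedForest E) :
    (roots E).card = Fintype.card I - E.card := by
  have himg : roots E = univ \ E.image Prod.fst := by
    ext b
    simp only [mem_roots, IsRoot, Finset.mem_sdiff, Finset.mem_univ, true_and,
      Finset.mem_image, not_exists, not_and]
    constructor
    · rintro h e he rfl
      exact h e.2 (by rwa [Prod.mk.eta])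
    · intro h c hc
      exact h (b, c) hc rfl
  rw [himg, Finset.card_sdiff_of_subset (Finset.subset_univ _), Finset.card_univ,
    Finset.card_image_of_injOn (fun e he e' he' hee => hF.2.1 e he e' he' hee)]

lemma card_edges_le {E : Finset (I × I)} (hF : IsRootedForest E) :
    E.card ≤ Fintype.card I := by
  calc E.card = (E.image Prod.fst).card :=
        (Finset.card_image_of_injOn (fun e he e' he' hee => hF.2.1 e he e' he' hee)).symm
    _ ≤ Fintype.card I := by
        simpa using Finset.card_le_card (Finset.subset_univ (E.image Prod.fst))

lemma roots_nonempty {E : Finset (I × I)} [Nonempty I] (hF : IsRootedForest E) :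
    (roots E).Nonempty := by
  obtain ⟨a⟩ := ‹Nonempty I›
  exact ⟨rootOf hF a, mem_roots.2 (rootOf_spec hF a).2⟩

lemma card_edges_lt {E : Finset (I × I)} [Nonempty I] (hF : IsRootedForest E) :
    E.card + 1 ≤ Fintype.card I := by
  have h1 : 1 ≤ (roots E).card := Finset.card_pos.2 (roots_nonempty hF)
  have h2 := card_roots hF
  have h3 := card_edges_le hF
  omega

open scoped Classical in
noncomputable def treeOf (E : Finset (I × I)) (b : I) : Finset I :=
  univ.filter (fun a => ReflTransGen (step E) a b)

lemma sum_card_treeOf {E : Finset (I × I)} (hF : IsRootedForest E) :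
    ∑ b ∈ roots E, (treeOf E b).card = Fintype.card I := by
  classical
  rw [← Finset.card_univ (α := I),
    Finset.card_eq_sum_card_fiberwise (f := fun a => rootOf hF a) (t := roots E)
      (fun a _ => mem_roots.2 (rootOf_spec hF a).2)]
  refine Finset.sum_congr rfl fun b hb => ?_
  congr 1
  ext a
  simp only [treeOf, Finset.mem_filter, Finset.mem_univ, true_and]
  constructor
  · intro h
    exact hF.root_unique (rootOf_spec hF a).1 h (rootOf_spec hF a).2 (mem_roots.1 hb)
  · rintro rfl
    exact (rootOf_spec hF a).1

open scoped Classical in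
lemma card_ext {E : Finset (I × I)} [Nonempty I] (hF : IsRootedForest E) :
    (univ.filter fun p : I × I =>
        IsRoot E p.1 ∧ ¬ ReflTransGen (step E) p.2 p.1).card
      = Fintype.card I * (Fintype.card I - 1 - E.card) := by
  classical
  set n := Fintype.card I with hn
  rw [Finset.card_eq_sum_card_fiberwise (f := Prod.fst) (t := univ) (fun x _ => mem_univ _)]
  have hfib : ∀ b : I,
      ((univ.filter fun p : I × I => IsRoot E p.1 ∧ ¬ ReflTransGen (step E) p.2 p.1).filter
        fun p => p.1 = b)
      = (univ.filter fun a : I => IsRoot E b ∧ ¬ ReflTransGen (step E) a b).image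
          (fun a => (b, a)) := by
    intro b
    ext ⟨x, y⟩
    simp only [Finset.mem_filter, Finset.mem_univ, true_and, Finset.mem_image, Prod.mk.injEq]
    constructor
    · rintro ⟨⟨h1, h2⟩, rfl⟩
      exact ⟨y, ⟨h1, h2⟩, rfl, rfl⟩
    · rintro ⟨a, ⟨h1, h2⟩, rfl, rfl⟩
      exact ⟨⟨h1, h2⟩, rfl⟩
  have hcard : ∀ b : I,
      ((univ.filter fun p : I × I => IsRoot E p.1 ∧ ¬ ReflTransGen (step E) p.2 p.1).filter
        fun p => p.1 = b).card
      = (univ.filter fun a : I => IsRoot E b ∧ ¬ ReflTransGen (step E) a b).card := by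
    intro b
    rw [hfib b, Finset.card_image_of_injective _ (fun a a' h => (Prod.mk.injEq .. ▸ h).2)]
  simp only [hcard]
  -- restrict the sum to roots
  rw [← Finset.sum_subset (Finset.subset_univ (roots E)) (fun b _ hb => by
    rw [Finset.card_eq_zero, Finset.filter_eq_empty_iff]
    intro a _
    exact fun h => hb (mem_roots.2 h.1) )]
  have hterm : ∀ b ∈ roots E,
      (univ.filter fun a : I => IsRoot E b ∧ ¬ ReflTransGen (step E) a b).card
        = n - (treeOf E b).card := by
    intro b hb
    have : (univ.filter fun a : I => IsRoot E b ∧ ¬ ReflTransGen (step E) a b)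
        = univ.filter fun a : I => ¬ ReflTransGen (step E) a b := by
      ext a
      simp only [Finset.mem_filter, Finset.mem_univ, true_and, and_iff_right_iff_imp]
      exact fun _ => mem_roots.1 hb
    rw [this, Finset.filter_not, Finset.card_sdiff_of_subset (Finset.filter_subset _ _),
      Finset.card_univ]
    rfl
  rw [Finset.sum_congr rfl hterm]
  -- now compute the sum
  have hsum := sum_card_treeOf hF
  have hr := card_roots hF
  have hle := card_edges_lt hF
  have hball : ∀ b ∈ roots E, (treeOf E b).card ≤ n := fun b _ => by
    simpa [hn] using Finset.card_le_card (Finset.subset_univ (treeOf E b))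
  obtain ⟨m, hm⟩ : ∃ m, (roots E).card = m + 1 := by
    have := Finset.card_pos.2 (roots_nonempty hF)
    exact ⟨(roots E).card - 1, by omega⟩
  have key : (∑ b ∈ roots E, (n - (treeOf E b).card)) + ∑ b ∈ roots E, (treeOf E b).card
      = (m + 1) * n := by
    rw [← Finset.sum_add_distrib]
    have : ∀ b ∈ roots E, n - (treeOf E b).card + (treeOf E b).card = n := fun b hb =>
      Nat.sub_add_cancel (hball b hb)
    rw [Finset.sum_congr rfl this, Finset.sum_const, hm]
    simp [mul_comm]
  have hmn : (m + 1) * n = m * n + n := by ring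
  have hEk : n - 1 - E.card = m := by omega
  have : (∑ b ∈ roots E, (n - (treeOf E b).card)) = m * n := by omega
  rw [this, hEk, mul_comm]

end ForestAux

namespace ForestAux

open Finset Relation

variable {I : Type*} [Fintype I] [DecidableEq I]

open scoped Classical in
lemma card_forests_zero :
    (univ.filter fun F : ForestOn I => F.1.card = 0).card = 1 := by
  classical
  have : (univ.filter fun F : ForestOn I => F.1.card = 0) = {emptyForest I} := by
    ext F
    simp only [Finset.mem_filter, Finset.mem_univ, true_and, Finset.mem_singleton,
      Finset.card_eq_zero]
    constructor
    · intro h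
      exact Subtype.ext (by simpa [emptyForest] using h)
    · rintro rfl
      rfl
  rw [this, Finset.card_singleton]

open scoped Classical in
lemma card_forests_rec [Nonempty I] (k : ℕ) :
    (k + 1) * (univ.filter fun F : ForestOn I => F.1.card = k + 1).card
      = (Fintype.card I * (Fintype.card I - 1 - k)) *
          (univ.filter fun F : ForestOn I => F.1.card = k).card := by
  classical
  set n := Fintype.card I with hn
  set A := univ.filter (fun q : ForestOn I × (I × I) => q.2 ∈ q.1.1 ∧ q.1.1.card = k + 1)
    with hA
  set B := univ.filter (fun q : ForestOn I × (I × I) =>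
      q.1.1.card = k ∧ IsRoot q.1.1 q.2.1 ∧ ¬ ReflTransGen (step q.1.1) q.2.2 q.2.1) with hB
  -- card A = (k+1) * #forests with k+1 edges
  have hAcard : A.card = ∑ F ∈ univ.filter (fun F : ForestOn I => F.1.card = k + 1), (k + 1) := by
    rw [Finset.card_eq_sum_card_fiberwise (f := Prod.fst)
      (t := univ.filter fun F : ForestOn I => F.1.card = k + 1)
      (fun q hq => by
        have hq' : q ∈ A := hq
        simp only [hA, Finset.mem_filter, Finset.mem_univ, true_and] at hq'
        exact Finset.mem_coe.2 (by
          simp only [Finset.mem_filter, Finset.mem_univ, true_and]; exact hq'.2))]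
    refine Finset.sum_congr rfl fun F hF => ?_
    simp only [Finset.mem_filter, Finset.mem_univ, true_and] at hF
    have : A.filter (fun q => q.1 = F) = F.1.image (fun e => (F, e)) := by
      ext ⟨G, e⟩
      simp only [hA, Finset.mem_filter, Finset.mem_univ, true_and, Finset.mem_image,
        Prod.mk.injEq]
      constructor
      · rintro ⟨⟨h1, _⟩, rfl⟩
        exact ⟨e, h1, rfl, rfl⟩
      · rintro ⟨e', he', rfl, rfl⟩
        exact ⟨⟨he', hF⟩, rfl⟩
    rw [this, Finset.card_image_of_injective _ (fun e e' h => (Prod.mk.injEq .. ▸ h).2), hF]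
  -- card B = n(n-1-k) * #forests with k edges
  have hBcard : B.card = ∑ F ∈ univ.filter (fun F : ForestOn I => F.1.card = k),
      (n * (n - 1 - k)) := by
    rw [Finset.card_eq_sum_card_fiberwise (f := Prod.fst)
      (t := univ.filter fun F : ForestOn I => F.1.card = k)
      (fun q hq => by
        have hq' : q ∈ B := hq
        simp only [hB, Finset.mem_filter, Finset.mem_univ, true_and] at hq'
        exact Finset.mem_coe.2 (by
          simp only [Finset.mem_filter, Finset.mem_univ, true_and]; exact hq'.1))]
    refine Finset.sum_congr rfl fun F hF => ?_
    simp only [Finset.mem_filter, Finset.mem_univ, true_and] at hF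
    have himg : B.filter (fun q => q.1 = F)
        = (univ.filter fun p : I × I =>
            IsRoot F.1 p.1 ∧ ¬ ReflTransGen (step F.1) p.2 p.1).image (fun p => (F, p)) := by
      ext ⟨G, p⟩
      simp only [hB, Finset.mem_filter, Finset.mem_univ, true_and, Finset.mem_image,
        Prod.mk.injEq]
      constructor
      · rintro ⟨⟨_, h2, h3⟩, rfl⟩
        exact ⟨p, ⟨h2, h3⟩, rfl, rfl⟩
      · rintro ⟨p', ⟨h2, h3⟩, rfl, rfl⟩
        exact ⟨⟨hF, h2, h3⟩, rfl⟩
    rw [himg, Finset.card_image_of_injective _ (fun p p' h => (Prod.mk.injEq .. ▸ h).2),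
      card_ext F.2, hF]
  -- the bijection between A and B
  have hAB : A.card = B.card := by
    refine Finset.card_bij'
      (i := fun q hq => (⟨q.1.1.erase q.2, q.1.2.subset (Finset.erase_subset _ _)⟩, q.2))
      (j := fun q hq => (⟨insert q.2 q.1.1, by
        have hq' := (Finset.mem_filter.1 hq).2
        have := (insert_forest_iff q.1.2 q.2.1 q.2.2).2 ⟨hq'.2.1, hq'.2.2⟩
        exact this.1
        ⟩, q.2)) ?_ ?_ ?_ ?_
    · rintro ⟨F, e⟩ hq
      simp only [hA, Finset.mem_filter, Finset.mem_univ, true_and] at hq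
      obtain ⟨he, hcard⟩ := hq
      have hforest : IsRootedForest (F.1.erase e) := F.2.subset (Finset.erase_subset _ _)
      have hins : insert e (F.1.erase e) = F.1 := Finset.insert_erase he
      have hext := (insert_forest_iff hforest e.1 e.2).1
        (by rw [Prod.mk.eta, hins]; exact ⟨F.2, Finset.notMem_erase _ _⟩)
      simp only [hB, Finset.mem_filter, Finset.mem_univ, true_and]
      exact ⟨by rw [Finset.card_erase_of_mem he, hcard]; rfl, hext.1, hext.2⟩
    · rintro ⟨F, e⟩ hq
      simp only [hB, Finset.mem_filter, Finset.mem_univ, true_and] at hq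
      obtain ⟨hcard, hroot, hrtg⟩ := hq
      have hnot := ((insert_forest_iff F.2 e.1 e.2).2 ⟨hroot, hrtg⟩).2
      rw [Prod.mk.eta] at hnot
      simp only [hA, Finset.mem_filter, Finset.mem_univ, true_and]
      exact ⟨Finset.mem_insert_self _ _, by rw [Finset.card_insert_of_notMem hnot, hcard]⟩
    · rintro ⟨F, e⟩ hq
      simp only [hA, Finset.mem_filter, Finset.mem_univ, true_and] at hq
      exact Prod.ext (Subtype.ext (Finset.insert_erase hq.1)) rfl
    · rintro ⟨F, e⟩ hq
      simp only [hB, Finset.mem_filter, Finset.mem_univ, true_and] at hq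
      have hnot := ((insert_forest_iff F.2 e.1 e.2).2 ⟨hq.2.1, hq.2.2⟩).2
      rw [Prod.mk.eta] at hnot
      exact Prod.ext (Subtype.ext (Finset.erase_insert hnot)) rfl
  have h1 : A.card = (univ.filter fun F : ForestOn I => F.1.card = k + 1).card * (k + 1) := by
    rw [hAcard, Finset.sum_const, smul_eq_mul]
  have h2 : B.card = (univ.filter fun F : ForestOn I => F.1.card = k).card
      * (n * (n - 1 - k)) := by
    rw [hBcard, Finset.sum_const, smul_eq_mul]
  rw [h1, h2] at hAB
  rw [mul_comm (k + 1), hAB]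
  ring

open scoped Classical in
lemma card_forests [Nonempty I] (k : ℕ) :
    (univ.filter fun F : ForestOn I => F.1.card = k).card
      = (Fintype.card I - 1).choose k * (Fintype.card I) ^ k := by
  classical
  induction k with
  | zero => simpa using card_forests_zero (I := I)
  | succ k ih =>
    set n := Fintype.card I with hn
    refine Nat.eq_of_mul_eq_mul_left (Nat.succ_pos k) ?_
    rw [card_forests_rec k, ih]
    have hch : (n - 1).choose (k + 1) * (k + 1) = (n - 1).choose k * (n - 1 - k) :=
      Nat.choose_succ_right_eq (n - 1) k
    calc n * (n - 1 - k) * ((n - 1).choose k * n ^ k)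
        = ((n - 1).choose k * (n - 1 - k)) * n ^ (k + 1) := by ring
      _ = ((n - 1).choose (k + 1) * (k + 1)) * n ^ (k + 1) := by rw [hch]
      _ = (k + 1) * ((n - 1).choose (k + 1) * n ^ (k + 1)) := by ring

end ForestAux


namespace MobiusAux

open Finset

variable {α : Type*} [Fintype α] [PartialOrder α]

open scoped Classical in
lemma nChains_zero (a b : α) : nChains (· ≤ ·) a b 0 = if a = b then 1 else 0 := by
  rcases eq_or_ne a b with rfl | h
  · rw [if_pos rfl]
    have : Unique {f : Fin 1 → α // f 0 = a ∧ f (Fin.last 0) = a ∧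
        ∀ i : Fin 0, (f i.castSucc ≤ f i.succ) ∧ f i.castSucc ≠ f i.succ} := by
      refine ⟨⟨⟨fun _ => a, rfl, rfl, fun i => i.elim0⟩⟩, ?_⟩
      rintro ⟨f, hf0, -, -⟩
      apply Subtype.ext
      funext i
      rw [Subsingleton.elim i 0]
      exact hf0
    exact Nat.card_unique
  · rw [if_neg h]
    have : IsEmpty {f : Fin 1 → α // f 0 = a ∧ f (Fin.last 0) = b ∧
        ∀ i : Fin 0, (f i.castSucc ≤ f i.succ) ∧ f i.castSucc ≠ f i.succ} := by
      refine ⟨fun s => h ?_⟩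
      obtain ⟨f, h1, h2, -⟩ := s
      rw [← h1, ← h2]
      exact congrArg f (Subsingleton.elim _ _)
    exact Nat.card_of_isEmpty

lemma nChains_eq_zero {a b : α} {k : ℕ} (h : Fintype.card α ≤ k) :
    nChains (· ≤ ·) a b k = 0 := by
  have : IsEmpty {f : Fin (k + 1) → α // f 0 = a ∧ f (Fin.last k) = b ∧
      ∀ i : Fin k, (f i.castSucc ≤ f i.succ) ∧ f i.castSucc ≠ f i.succ} := by
    constructor
    rintro ⟨f, h0, hl, he⟩
    have hsm : StrictMono f :=
      Fin.strictMono_iff_lt_succ.2 fun i => lt_of_le_of_ne (he i).1 (he i).2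
    have hc := Fintype.card_le_of_injective f hsm.injective
    rw [Fintype.card_fin] at hc
    omega
  exact Nat.card_of_isEmpty

lemma nat_card_fiberwise {β : Type*} [Finite β] (g : β → α) :
    Nat.card β = ∑ c : α, Nat.card {s : β // g s = c} := by
  classical
  letI : Fintype β := Fintype.ofFinite β
  rw [Nat.card_eq_fintype_card, ← Finset.card_univ,
    Finset.card_eq_sum_card_fiberwise (f := g) (t := univ) (fun x _ => mem_univ _)]
  refine Finset.sum_congr rfl fun c _ => ?_
  rw [Nat.card_eq_fintype_card, Fintype.card_subtype]

open scoped Classical in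
lemma nChains_succ (a b : α) (k : ℕ) :
    nChains (· ≤ ·) a b (k + 1) = ∑ c ∈ univ.filter (· < b), nChains (· ≤ ·) a c k := by
  classical
  have hfib := nat_card_fiberwise
    (β := {f : Fin (k + 2) → α // f 0 = a ∧ f (Fin.last (k + 1)) = b ∧
      ∀ i : Fin (k + 1), (f i.castSucc ≤ f i.succ) ∧ f i.castSucc ≠ f i.succ})
    (fun s => s.1 (Fin.last k).castSucc)
  have hper : ∀ c : α,
      Nat.card {s : {f : Fin (k + 2) → α // f 0 = a ∧ f (Fin.last (k + 1)) = b ∧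
          ∀ i : Fin (k + 1), (f i.castSucc ≤ f i.succ) ∧ f i.castSucc ≠ f i.succ} //
            s.1 (Fin.last k).castSucc = c}
        = if c < b then nChains (· ≤ ·) a c k else 0 := by
    intro c
    by_cases hc : c < b
    · rw [if_pos hc]
      -- forward data
      have hfwd : ∀ f : Fin (k + 2) → α, f 0 = a → f (Fin.last (k + 1)) = b →
          (∀ i : Fin (k + 1), (f i.castSucc ≤ f i.succ) ∧ f i.castSucc ≠ f i.succ) →
          f (Fin.last k).castSucc = c →
          ((f ∘ Fin.castSucc) 0 = a ∧ (f ∘ Fin.castSucc) (Fin.last k) = c ∧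
            ∀ i : Fin k, ((f ∘ Fin.castSucc) i.castSucc ≤ (f ∘ Fin.castSucc) i.succ) ∧
              (f ∘ Fin.castSucc) i.castSucc ≠ (f ∘ Fin.castSucc) i.succ) := by
        intro f h0 hl he hfc
        refine ⟨?_, hfc, ?_⟩
        · show f (Fin.castSucc 0) = a
          rw [Fin.castSucc_zero]
          exact h0
        · intro i
          have h := he i.castSucc
          show (f i.castSucc.castSucc ≤ f i.succ.castSucc) ∧ f i.castSucc.castSucc ≠ f i.succ.castSucc
          rwa [← Fin.succ_castSucc]
      -- backward data
      have hbwd : ∀ u : Fin (k + 1) → α, u 0 = a → u (Fin.last k) = c →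
          (∀ i : Fin k, (u i.castSucc ≤ u i.succ) ∧ u i.castSucc ≠ u i.succ) →
          ((Fin.snoc u b : Fin (k + 2) → α) 0 = a ∧
            (Fin.snoc u b : Fin (k + 2) → α) (Fin.last (k + 1)) = b ∧
            ∀ i : Fin (k + 1), ((Fin.snoc u b : Fin (k + 2) → α) i.castSucc ≤
                (Fin.snoc u b : Fin (k + 2) → α) i.succ) ∧
              (Fin.snoc u b : Fin (k + 2) → α) i.castSucc ≠
                (Fin.snoc u b : Fin (k + 2) → α) i.succ) := by
        intro u h0 hl he
        refine ⟨?_, by simp, ?_⟩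
        · show (Fin.snoc u b : Fin (k + 2) → α) (Fin.castSucc 0) = a
          rw [Fin.snoc_castSucc]
          exact h0
        · intro i
          refine Fin.lastCases ?_ (fun j => ?_) i
          · rw [Fin.succ_last, Fin.snoc_last, Fin.snoc_castSucc, hl]
            exact ⟨hc.le, hc.ne⟩
          · rw [Fin.succ_castSucc, Fin.snoc_castSucc, Fin.snoc_castSucc]
            exact he j
      refine Nat.card_congr (Equiv.mk
        (fun t => ⟨t.1.1 ∘ Fin.castSucc, hfwd t.1.1 t.1.2.1 t.1.2.2.1 t.1.2.2.2 t.2⟩)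
        (fun u => ⟨⟨Fin.snoc u.1 b, hbwd u.1 u.2.1 u.2.2.1 u.2.2.2⟩,
          (Fin.snoc_castSucc (α := fun _ : Fin (k + 2) => α) b u.1 (Fin.last k)).trans u.2.2.1⟩)
        ?_ ?_)
      · rintro ⟨⟨f, h0, hl, he⟩, hfc⟩
        refine Subtype.ext (Subtype.ext ?_)
        show (Fin.snoc (f ∘ Fin.castSucc) b : Fin (k + 2) → α) = f
        funext i
        refine Fin.lastCases ?_ (fun j => ?_) i
        · rw [Fin.snoc_last]
          exact hl.symm
        · rw [Fin.snoc_castSucc]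
          rfl
      · rintro ⟨u, h0, hl, he⟩
        refine Subtype.ext ?_
        show (Fin.snoc u b ∘ Fin.castSucc : Fin (k + 1) → α) = u
        funext i
        show (Fin.snoc u b : Fin (k + 2) → α) i.castSucc = u i
        rw [Fin.snoc_castSucc]
    · rw [if_neg hc]
      have : IsEmpty {s : {f : Fin (k + 2) → α // f 0 = a ∧ f (Fin.last (k + 1)) = b ∧
          ∀ i : Fin (k + 1), (f i.castSucc ≤ f i.succ) ∧ f i.castSucc ≠ f i.succ} //
            s.1 (Fin.last k).castSucc = c} := by
        constructor
        rintro ⟨⟨f, h0, hl, he⟩, hfc⟩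
        have hfc' : f (Fin.last k).castSucc = c := hfc
        have hstep := he (Fin.last k)
        rw [Fin.succ_last, hl, hfc'] at hstep
        exact hc (lt_of_le_of_ne hstep.1 hstep.2)
      exact Nat.card_of_isEmpty
  rw [show nChains (· ≤ ·) a b (k + 1) = Nat.card {f : Fin (k + 2) → α // f 0 = a ∧
      f (Fin.last (k + 1)) = b ∧ ∀ i : Fin (k + 1),
        (f i.castSucc ≤ f i.succ) ∧ f i.castSucc ≠ f i.succ} from rfl,
    hfib, Finset.sum_congr rfl (fun c _ => hper c), ← Finset.sum_filter]

open scoped Classical in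
lemma filter_le_eq_insert (b : α) :
    univ.filter (· ≤ b) = insert b (univ.filter (· < b)) := by
  ext c
  simp only [Finset.mem_filter, Finset.mem_univ, true_and, Finset.mem_insert]
  constructor
  · intro h
    rcases h.lt_or_eq with h' | h'
    exacts [Or.inr h', Or.inl h']
  · rintro (rfl | h)
    exacts [le_rfl, h.le]

open scoped Classical in
lemma sum_mobius_le (r : α → α → Prop) (hr : r = (· ≤ ·)) (a b : α) (s : Finset α)
    (hs : ∀ c, c ∈ s ↔ c ≤ b) :
    ∑ c ∈ s, mobius r a c = if a = b then 1 else 0 := by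
  subst hr
  classical
  have hseq : s = univ.filter (· ≤ b) := Finset.ext fun c => by
    simp [hs c, Finset.mem_filter]
  rw [hseq, filter_le_eq_insert b, Finset.sum_insert (by simp)]
  have hN : Fintype.card α ≤ Nat.card α := le_of_eq Nat.card_eq_fintype_card.symm
  have h4 : ∀ c : α, ∑ k ∈ Finset.range (Nat.card α), (-1 : ℤ) ^ k * nChains (· ≤ ·) a c k
      = mobius (· ≤ ·) a c := by
    intro c
    rw [mobius, Finset.sum_range_succ, nChains_eq_zero hN]
    simp
  have h2 : ∀ k, ((nChains (· ≤ ·) a b (k + 1) : ℤ))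
      = ∑ c ∈ univ.filter (· < b), (nChains (· ≤ ·) a c k : ℤ) := by
    intro k
    rw [nChains_succ]
    push_cast
    rfl
  have key : mobius (· ≤ ·) a b
      = (if a = b then (1 : ℤ) else 0) - ∑ c ∈ univ.filter (· < b), mobius (· ≤ ·) a c := by
    rw [mobius, Finset.sum_range_succ']
    have hzero : (-1 : ℤ) ^ 0 * nChains (· ≤ ·) a b 0 = if a = b then (1 : ℤ) else 0 := by
      rw [nChains_zero]
      split <;> simp
    rw [hzero]
    have h3 : ∑ k ∈ Finset.range (Nat.card α), (-1 : ℤ) ^ (k + 1) * nChains (· ≤ ·) a b (k + 1)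
        = -∑ c ∈ univ.filter (· < b), mobius (· ≤ ·) a c := by
      calc ∑ k ∈ Finset.range (Nat.card α), (-1 : ℤ) ^ (k + 1) * nChains (· ≤ ·) a b (k + 1)
          = ∑ k ∈ Finset.range (Nat.card α), ∑ c ∈ univ.filter (· < b),
              -((-1 : ℤ) ^ k * nChains (· ≤ ·) a c k) := by
            refine Finset.sum_congr rfl fun k _ => ?_
            rw [h2 k, Finset.mul_sum]
            exact Finset.sum_congr rfl fun c _ => by ring
        _ = ∑ c ∈ univ.filter (· < b), ∑ k ∈ Finset.range (Nat.card α),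
              -((-1 : ℤ) ^ k * nChains (· ≤ ·) a c k) := Finset.sum_comm
        _ = -∑ c ∈ univ.filter (· < b), mobius (· ≤ ·) a c := by
            rw [← Finset.sum_neg_distrib]
            refine Finset.sum_congr rfl fun c _ => ?_
            rw [Finset.sum_neg_distrib, h4 c]
    rw [h3]
    ring
  rw [key]
  ring

end MobiusAux

namespace ForestAux

open Finset

variable {I : Type*} [Fintype I] [DecidableEq I]

open scoped Classical in
lemma sum_le_neg_one_pow (F : ForestOn I) (s : Finset (ForestOn I))
    (hs : ∀ c, c ∈ s ↔ c ≤ F) :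
    ∑ c ∈ s, ((-1 : ℤ) ^ (c : ForestOn I).1.card)
      = if F = emptyForest I then 1 else 0 := by
  classical
  have hbij : ∑ c ∈ s, ((-1 : ℤ) ^ (c : ForestOn I).1.card)
      = ∑ S ∈ F.1.powerset, (-1 : ℤ) ^ S.card := by
    refine Finset.sum_bij' (i := fun c _ => c.1)
      (j := fun S hS => ⟨S, F.2.subset (Finset.mem_powerset.1 hS)⟩) ?_ ?_ ?_ ?_ ?_
    · intro c hc
      exact Finset.mem_powerset.2 ((hs c).1 hc)
    · intro S hS
      exact (hs _).2 (Finset.mem_powerset.1 hS)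
    · intro c hc
      exact Subtype.ext rfl
    · intro S hS
      rfl
    · intro c hc
      rfl
  rw [hbij, Finset.sum_powerset_neg_one_pow_card]
  refine if_congr ?_ rfl rfl
  constructor
  · intro h
    exact Subtype.ext h
  · intro h
    rw [h]
    rfl

open scoped Classical in
lemma mobius_emptyForest (F : ForestOn I) :
    mobius (· ≤ ·) (emptyForest I) F = (-1 : ℤ) ^ F.1.card := by
  classical
  suffices H : ∀ m : ℕ, ∀ F : ForestOn I, F.1.card = m →
      mobius (· ≤ ·) (emptyForest I) F = (-1 : ℤ) ^ F.1.card from H F.1.card F rfl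
  intro m
  induction m using Nat.strong_induction_on with
  | _ m ih =>
    intro F hFm
    set s : Finset (ForestOn I) := univ.filter (· < F) with hsdef
    have hFs : F ∉ s := by simp [hsdef]
    have hmem : ∀ c : ForestOn I, c ∈ insert F s ↔ c ≤ F := by
      intro c
      simp only [hsdef, Finset.mem_insert, mem_filter, mem_univ, true_and]
      constructor
      · rintro (rfl | h)
        exacts [le_rfl, h.le]
      · intro h
        rcases h.lt_or_eq with h' | h'
        exacts [Or.inr h', Or.inl h']
    have h0 := MobiusAux.sum_mobius_le (α := ForestOn I) (· ≤ ·) rfl (emptyForest I) F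
      (insert F s) hmem
    have h1 := sum_le_neg_one_pow F (insert F s) hmem
    rw [Finset.sum_insert hFs] at h0 h1
    have hIH : ∀ c ∈ s,
        mobius (· ≤ ·) (emptyForest I) c = (-1 : ℤ) ^ (c : ForestOn I).1.card := by
      intro c hc
      simp only [hsdef, mem_filter, mem_univ, true_and] at hc
      have hss : c.1 ⊂ F.1 :=
        Finset.ssubset_iff_subset_ne.2 ⟨hc.le, fun h => hc.ne (Subtype.ext h)⟩
      exact ih c.1.card (hFm ▸ Finset.card_lt_card hss) c rfl
    rw [Finset.sum_congr rfl hIH] at h0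
    rcases eq_or_ne F (emptyForest I) with he | he
    · rw [if_pos he.symm] at h0
      rw [if_pos he] at h1
      linarith [h0, h1]
    · rw [if_neg (fun h => he h.symm)] at h0
      rw [if_neg he] at h1
      linarith [h0, h1]

end ForestAux


/-- For `n ≥ 1`, the characteristic polynomial of the poset of rooted forests on
`{1,…,n}` is `Σ_F μ(0̂,F)·s^{(n−1)−|E_F|} = (s−n)^{n−1}`. -/
theorem forest_charpoly (n : ℕ) (hn : 1 ≤ n) :
    ∑ F : ForestOn (Fin n),
        Polynomial.C (mobius (· ≤ · : ForestOn (Fin n) → ForestOn (Fin n) → Prop)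
            (emptyForest (Fin n)) F) *
          (Polynomial.X : Polynomial ℤ) ^ (n - 1 - F.1.card)
      = (Polynomial.X - Polynomial.C (n : ℤ)) ^ (n - 1) := by
  classical
  have hne : Nonempty (Fin n) := ⟨⟨0, hn⟩⟩
  have hmob : ∀ F : ForestOn (Fin n),
      Polynomial.C (mobius (· ≤ ·) (emptyForest (Fin n)) F)
        = (-1 : Polynomial ℤ) ^ F.1.card := fun F => by
    rw [ForestAux.mobius_emptyForest F, map_pow, map_neg, map_one]
  have step1 : ∑ F : ForestOn (Fin n),
      Polynomial.C (mobius (· ≤ ·) (emptyForest (Fin n)) F)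
        * (Polynomial.X : Polynomial ℤ) ^ (n - 1 - F.1.card)
      = ∑ F : ForestOn (Fin n),
        (-1 : Polynomial ℤ) ^ F.1.card * (Polynomial.X : Polynomial ℤ) ^ (n - 1 - F.1.card) :=
    Finset.sum_congr rfl fun F _ => by rw [hmob F]
  have hmaps : ∀ F : ForestOn (Fin n), F ∈ Finset.univ → F.1.card ∈ Finset.range n := by
    intro F _
    have := ForestAux.card_edges_lt F.2
    rw [Fintype.card_fin] at this
    exact Finset.mem_range.2 (by omega)
  have step2 : ∑ F : ForestOn (Fin n),
        (-1 : Polynomial ℤ) ^ F.1.card * (Polynomial.X : Polynomial ℤ) ^ (n - 1 - F.1.card)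
      = ∑ k ∈ Finset.range n, ((n - 1).choose k * n ^ k)
          • ((-1 : Polynomial ℤ) ^ k * (Polynomial.X : Polynomial ℤ) ^ (n - 1 - k)) := by
    rw [← Finset.sum_fiberwise_of_maps_to hmaps
      (fun F : ForestOn (Fin n) =>
        (-1 : Polynomial ℤ) ^ F.1.card * (Polynomial.X : Polynomial ℤ) ^ (n - 1 - F.1.card))]
    refine Finset.sum_congr rfl fun k _ => ?_
    have hcongr : ∀ F ∈ Finset.univ.filter (fun F : ForestOn (Fin n) => F.1.card = k),
        (-1 : Polynomial ℤ) ^ F.1.card * (Polynomial.X : Polynomial ℤ) ^ (n - 1 - F.1.card)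
          = (-1 : Polynomial ℤ) ^ k * (Polynomial.X : Polynomial ℤ) ^ (n - 1 - k) := by
      intro F hF
      simp only [Finset.mem_filter, Finset.mem_univ, true_and] at hF
      rw [hF]
    rw [Finset.sum_congr rfl hcongr, Finset.sum_const, ForestAux.card_forests k,
      Fintype.card_fin]
  rw [step1, step2, sub_pow, Nat.sub_add_cancel hn, ← Finset.sum_range_reflect]
  refine Finset.sum_congr rfl fun j hj => ?_
  have hj' : j ≤ n - 1 := by
    have := Finset.mem_range.1 hj
    omega
  have h1 : n - 1 - (n - 1 - j) = j := by omega
  have h2 : (n - 1).choose (n - 1 - j) = (n - 1).choose j := Nat.choose_symm hj'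
  have h3 : ((-1 : Polynomial ℤ)) ^ (j + (n - 1)) = (-1 : Polynomial ℤ) ^ (n - 1 - j) := by
    rw [show j + (n - 1) = 2 * j + (n - 1 - j) by omega, pow_add, pow_mul]
    simp
  rw [h1, h2, h3, nsmul_eq_mul]
  push_cast
  rw [show ((n : Polynomial ℤ)) = Polynomial.C (n : ℤ) by simp]
  ring
end
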